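/- arXiv:0705.4256 — 4 statements merged into one kernel-verified Lean document; each statement's English description precedes it below -/
import Mathlib

section
/- Let q be a prime power, F_q the finite field with q elements, d a positive integer, and C ≥ 1 a real constant. Let A ⊆ F_q satisfy |A| ≥ C^(1/d) · q^(1/2 + 1/(2(2d-1))). Then |dA²| ≥ q · C^(2 - 1/d) / (C^(2 - 1/d) + 1). -/
open Finset

namespace Aux1914

variable {F : Type*} [Field F] [Fintype F] [DecidableEq F]

lemma addChar_map_sum {M : Type*} [CommMonoid M] (ψ : AddChar F M) {ι : Type*} (s : Finset ι)
    (f : ι → F) : ψ (∑ i ∈ s, f i) = ∏ i ∈ s, ψ (f i) := by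
  classical
  induction s using Finset.cons_induction with
  | empty => simp
  | cons a s ha ih => rw [Finset.sum_cons, Finset.prod_cons, AddChar.map_add_eq_mul, ih]

lemma count_pairs {α : Type*} [DecidableEq α] (Q : Finset α) (f : α → F) :
    ((Q ×ˢ Q).filter fun z => f z.1 = f z.2).card
      = ∑ t : F, ((Q.filter fun x => f x = t).card) ^ 2 := by
  rw [Finset.card_eq_sum_card_fiberwise (f := fun z => f z.1) (t := Finset.univ)
    (fun _ _ => mem_univ _)]
  refine Finset.sum_congr rfl fun t _ => ?_
  rw [sq, ← Finset.card_product]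
  congr 1
  ext z
  simp only [Finset.mem_filter, Finset.mem_product]
  constructor
  · rintro ⟨⟨⟨h1, h2⟩, h3⟩, h4⟩
    exact ⟨⟨h1, h4⟩, h2, h3 ▸ h4⟩
  · rintro ⟨⟨h1, h2⟩, h3, h4⟩
    exact ⟨⟨⟨h1, h3⟩, h2.trans h4.symm⟩, h2⟩

lemma energy_eq {α : Type*} [DecidableEq α] (Q : Finset α) (f : α → F) {ψ : AddChar F ℂ}
    (hψ : ψ.IsPrimitive) :
    ∑ s : F, Complex.normSq (∑ x ∈ Q, ψ (s * f x))
      = (Fintype.card F : ℝ) * ((Q ×ˢ Q).filter fun z => f z.1 = f z.2).card := by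
  have key : ∑ s : F, ((∑ x ∈ Q, ψ (s * f x)) * (starRingEnd ℂ) (∑ x ∈ Q, ψ (s * f x)))
      = ((Fintype.card F : ℂ) * (((Q ×ˢ Q).filter fun z => f z.1 = f z.2).card : ℂ)) := by
    have step1 : ∀ s : F, (∑ x ∈ Q, ψ (s * f x)) * (starRingEnd ℂ) (∑ x ∈ Q, ψ (s * f x))
        = ∑ z ∈ Q ×ˢ Q, ψ (s * (f z.1 - f z.2)) := by
      intro s
      rw [map_sum, Finset.sum_mul_sum, ← Finset.sum_product']
      refine Finset.sum_congr rfl fun z _ => ?_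
      rw [← AddChar.map_neg_eq_conj, ← AddChar.map_add_eq_mul]
      ring_nf
    simp_rw [step1]
    rw [Finset.sum_comm]
    have step2 : ∀ z : α × α, ∑ s : F, ψ (s * (f z.1 - f z.2))
        = if f z.1 = f z.2 then (Fintype.card F : ℂ) else 0 := by
      intro z
      rw [AddChar.sum_mulShift _ hψ]
      simp only [sub_eq_zero]
      split_ifs <;> simp
    simp_rw [step2]
    rw [Finset.sum_ite, Finset.sum_const, Finset.sum_const_zero, add_zero, nsmul_eq_mul,
      mul_comm]
  have lhs : ∑ s : F, ((∑ x ∈ Q, ψ (s * f x)) * (starRingEnd ℂ) (∑ x ∈ Q, ψ (s * f x)))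
      = ((∑ s : F, Complex.normSq (∑ x ∈ Q, ψ (s * f x)) : ℝ) : ℂ) := by
    push_cast
    refine Finset.sum_congr rfl fun s _ => ?_
    rw [Complex.mul_conj]
  rw [lhs] at key
  exact_mod_cast key

lemma energy_card_bound (A : Finset F)
    (hqn : (Fintype.card F : ℝ) ≤ (A.card : ℝ)^2) :
    (Fintype.card F : ℝ) *
      ((((A ×ˢ A) ×ˢ (A ×ˢ A)).filter fun z => z.1.1 * z.1.2 = z.2.1 * z.2.2).card : ℝ)
      ≤ (A.card : ℝ)^4 + (Fintype.card F : ℝ) * (A.card : ℝ)^3 := by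
  classical
  set r : F → ℕ := fun t => ((A ×ˢ A).filter fun z => z.1 * z.2 = t).card with hr
  have hE : (((A ×ˢ A) ×ˢ (A ×ˢ A)).filter fun z => z.1.1 * z.1.2 = z.2.1 * z.2.2).card
      = ∑ t : F, r t ^ 2 := count_pairs (A ×ˢ A) (fun z => z.1 * z.2)
  have htot : ∑ t : F, r t = A.card ^ 2 := by
    rw [← Finset.card_eq_sum_card_fiberwise
      (f := fun z : F × F => z.1 * z.2) (t := univ) (fun _ _ => mem_univ _),
      Finset.card_product, sq]
  have hq0 : (0:ℝ) ≤ (Fintype.card F : ℝ) := Nat.cast_nonneg _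
  have hn0 : (0:ℝ) ≤ (A.card : ℝ) := Nat.cast_nonneg _
  by_cases h0 : (0:F) ∈ A
  · -- 0 ∈ A
    have hn1 : 1 ≤ A.card := Finset.card_pos.mpr ⟨0, h0⟩
    have hrle : ∀ t : F, t ≠ 0 → r t ≤ A.card - 1 := by
      intro t ht
      have : r t ≤ (A.erase 0).card := by
        apply Finset.card_le_card_of_injOn (fun z => z.1)
        · intro z hz
          have hz' := Finset.mem_filter.mp hz
          have hz1 : z.1 ∈ A := (Finset.mem_product.mp hz'.1).1
          refine Finset.mem_erase.mpr ⟨fun h => ht ?_, hz1⟩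
          rw [← hz'.2, show z.1 = 0 from h, zero_mul]
        · intro z hz w hw h1
          have hz' := Finset.mem_filter.mp hz
          have hw' := Finset.mem_filter.mp hw
          have hz1 : z.1 ∈ A := (Finset.mem_product.mp hz'.1).1
          have hzne : z.1 ≠ 0 := by
            intro h; exact ht (by rw [← hz'.2, h, zero_mul])
          have h2 : z.1 * z.2 = w.1 * w.2 := by rw [hz'.2, hw'.2]
          rw [← (show z.1 = w.1 from h1)] at h2
          exact Prod.ext h1 (mul_left_cancel₀ hzne h2)
      rwa [Finset.card_erase_of_mem h0] at this
    have hr0 : r 0 ≤ 2 * A.card - 1 := by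
      have hsub : (A ×ˢ A).filter (fun z => z.1 * z.2 = 0)
          ⊆ ({(0:F)} ×ˢ A) ∪ (A ×ˢ {(0:F)}) := by
        intro z hz
        have hz' := Finset.mem_filter.mp hz
        have hz1 : z.1 ∈ A := (Finset.mem_product.mp hz'.1).1
        have hz2 : z.2 ∈ A := (Finset.mem_product.mp hz'.1).2
        rcases mul_eq_zero.mp hz'.2 with h | h
        · exact Finset.mem_union_left _ (Finset.mem_product.mpr
            ⟨Finset.mem_singleton.mpr h, hz2⟩)
        · exact Finset.mem_union_right _ (Finset.mem_product.mpr
            ⟨hz1, Finset.mem_singleton.mpr h⟩)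
      have h1 : (({(0:F)} ×ˢ A) ∪ (A ×ˢ {(0:F)})).card
            + (({(0:F)} ×ˢ A) ∩ (A ×ˢ {(0:F)})).card
          = ({(0:F)} ×ˢ A).card + (A ×ˢ {(0:F)}).card := Finset.card_union_add_card_inter _ _
      have h2 : ({(0:F)} ×ˢ A).card = A.card := by
        rw [Finset.card_product, Finset.card_singleton, one_mul]
      have h3 : (A ×ˢ {(0:F)}).card = A.card := by
        rw [Finset.card_product, Finset.card_singleton, mul_one]
      have h4 : 1 ≤ (({(0:F)} ×ˢ A) ∩ (A ×ˢ {(0:F)})).card := by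
        refine Finset.card_pos.mpr ⟨((0:F), (0:F)), ?_⟩
        refine Finset.mem_inter.mpr ⟨?_, ?_⟩
        · exact Finset.mem_product.mpr ⟨Finset.mem_singleton.mpr rfl, h0⟩
        · exact Finset.mem_product.mpr ⟨h0, Finset.mem_singleton.mpr rfl⟩
      have h5 := Finset.card_le_card hsub
      have h6 : r 0 = ((A ×ˢ A).filter (fun z => z.1 * z.2 = 0)).card := rfl
      omega
    have hsplit : r 0 + ∑ t ∈ univ.erase 0, r t = A.card ^ 2 := by
      rw [Finset.add_sum_erase _ _ (mem_univ 0)]; exact htot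
    have hEsplit : ∑ t : F, r t ^ 2 = r 0 ^ 2 + ∑ t ∈ univ.erase 0, r t ^ 2 :=
      (Finset.add_sum_erase _ _ (mem_univ 0)).symm
    have hper : ∑ t ∈ univ.erase 0, r t ^ 2 ≤ (A.card - 1) * ∑ t ∈ univ.erase 0, r t := by
      rw [Finset.mul_sum]
      refine Finset.sum_le_sum fun t ht => ?_
      have := hrle t (Finset.mem_erase.mp ht).1
      rw [sq]
      exact Nat.mul_le_mul this le_rfl
    -- move to reals
    have hn1R : (1:ℝ) ≤ (A.card : ℝ) := by exact_mod_cast hn1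
    have hu : (r 0 : ℝ) ≤ 2 * (A.card : ℝ) - 1 := by
      have : ((r 0 : ℕ) : ℝ) ≤ ((2 * A.card - 1 : ℕ) : ℝ) := by exact_mod_cast hr0
      rwa [Nat.cast_sub (by omega), Nat.cast_mul, Nat.cast_ofNat, Nat.cast_one] at this
    have hu0 : (0:ℝ) ≤ (r 0 : ℝ) := Nat.cast_nonneg _
    have hm : (∑ t ∈ univ.erase (0:F), (r t : ℝ)) = (A.card : ℝ)^2 - (r 0 : ℝ) := by
      have : ((r 0 + ∑ t ∈ univ.erase (0:F), r t : ℕ) : ℝ) = ((A.card ^2 : ℕ) : ℝ) := by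
        exact_mod_cast congrArg (Nat.cast : ℕ → ℝ) hsplit
      push_cast at this
      linarith
    have hEreal : ((∑ t : F, r t ^ 2 : ℕ) : ℝ)
        ≤ (r 0 : ℝ)^2 + ((A.card : ℝ) - 1) * ((A.card : ℝ)^2 - (r 0 : ℝ)) := by
      have h6 : ((∑ t ∈ univ.erase (0:F), r t ^ 2 : ℕ) : ℝ)
          ≤ ((A.card : ℝ) - 1) * ((A.card : ℝ)^2 - (r 0 : ℝ)) := by
        have h6a := (Nat.cast_le (α := ℝ)).mpr hper
        rw [Nat.cast_mul, Nat.cast_sub hn1] at h6a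
        push_cast at h6a ⊢
        rw [hm] at h6a
        exact h6a
      have h7 : ((∑ t : F, r t ^ 2 : ℕ) : ℝ)
          = (r 0 : ℝ)^2 + ((∑ t ∈ univ.erase (0:F), r t ^ 2 : ℕ) : ℝ) := by
        exact_mod_cast congrArg (Nat.cast : ℕ → ℝ) hEsplit
      linarith
    rw [hE]
    nlinarith [mul_le_mul_of_nonneg_left hEreal hq0,
      mul_nonneg hq0 (mul_nonneg hu0 (sub_nonneg.mpr hu)),
      mul_nonneg (mul_nonneg hq0 hn0) (sub_nonneg.mpr hu),
      mul_nonneg (sub_nonneg.mpr hqn) (sq_nonneg (A.card : ℝ)),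
      mul_nonneg hq0 hn0, mul_nonneg hq0 (mul_nonneg hn0 hn0)]
  · -- 0 ∉ A
    have hrle : ∀ t : F, r t ≤ A.card := by
      intro t
      apply Finset.card_le_card_of_injOn (fun z => z.1)
      · intro z hz
        exact (Finset.mem_product.mp (Finset.mem_filter.mp hz).1).1
      · intro z hz w hw h1
        have hz' := Finset.mem_filter.mp hz
        have hw' := Finset.mem_filter.mp hw
        have hz1 : z.1 ∈ A := (Finset.mem_product.mp hz'.1).1
        have hzne : z.1 ≠ 0 := fun h => h0 (h ▸ hz1)
        have h2 : z.1 * z.2 = w.1 * w.2 := by rw [hz'.2, hw'.2]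
        rw [← (show z.1 = w.1 from h1)] at h2
        exact Prod.ext h1 (mul_left_cancel₀ hzne h2)
    have hEle : ∑ t : F, r t ^ 2 ≤ A.card ^ 3 := by
      calc ∑ t : F, r t ^ 2 ≤ ∑ t : F, A.card * r t := by
            refine Finset.sum_le_sum fun t _ => ?_
            rw [sq]; exact Nat.mul_le_mul (hrle t) le_rfl
        _ = A.card * ∑ t : F, r t := by rw [Finset.mul_sum]
        _ = A.card ^ 3 := by rw [htot]; ring
    rw [hE]
    have : ((∑ t : F, r t ^ 2 : ℕ) : ℝ) ≤ (A.card : ℝ)^3 := by exact_mod_cast hEle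
    nlinarith [mul_nonneg hn0 (mul_nonneg hn0 (mul_nonneg hn0 hn0))]

lemma endgame (d : ℕ) (hd : 0 < d) (C qR n Sc Sig : ℝ) (hC : 1 ≤ C) (hq : 2 ≤ qR)
    (hn : C ^ ((1:ℝ)/d) * qR ^ ((1:ℝ)/2 + 1/(2*(2*(d:ℝ)-1))) ≤ n)
    (hCS : n^(4*d) ≤ Sc * Sig)
    (hSig : qR * Sig ≤ n^(4*d) + qR^d * n^(2*d+1))
    (hSigpos : 0 < Sig) :
    qR * C^((2:ℝ)-1/d) / (C^((2:ℝ)-1/d)+1) ≤ Sc := by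
  have hd1 : (1:ℝ) ≤ (d:ℝ) := by exact_mod_cast hd
  have hq0 : (0:ℝ) < qR := by linarith
  have hq1 : (1:ℝ) ≤ qR := by linarith
  have hC0 : (0:ℝ) ≤ C := by linarith
  have he0 : (0:ℝ) ≤ (1:ℝ)/2 + 1/(2*(2*(d:ℝ)-1)) := by
    have : (1:ℝ) ≤ 2*(d:ℝ)-1 := by linarith
    positivity
  have hCd : (1:ℝ) ≤ C ^ ((1:ℝ)/d) := by
    have h := Real.rpow_le_rpow_of_exponent_le hC (show (0:ℝ) ≤ (1:ℝ)/d by positivity)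
    rwa [Real.rpow_zero] at h
  have hqe : (1:ℝ) ≤ qR ^ ((1:ℝ)/2 + 1/(2*(2*(d:ℝ)-1))) := by
    have h := Real.rpow_le_rpow_of_exponent_le hq1 he0
    rwa [Real.rpow_zero] at h
  have hn1 : (1:ℝ) ≤ n := le_trans (by nlinarith) hn
  have hn0 : (0:ℝ) ≤ n := by linarith
  set X := C ^ ((2:ℝ)-1/d) with hX
  have hX1 : (1:ℝ) ≤ X := by
    have hdiv : 1/(d:ℝ) ≤ 1 := by
      rw [div_le_one (by linarith)]; exact hd1
    have h := Real.rpow_le_rpow_of_exponent_le hC (show (0:ℝ) ≤ 2 - 1/(d:ℝ) by linarith)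
    rwa [Real.rpow_zero] at h
  have hX0 : (0:ℝ) < X := by linarith
  -- key: X * qR^d ≤ n^(2d-1)
  have hkey : X * qR^d ≤ n^(2*d-1) := by
    have hM0 : (0:ℝ) ≤ C ^ ((1:ℝ)/d) * qR ^ ((1:ℝ)/2 + 1/(2*(2*(d:ℝ)-1))) := by positivity
    have h1 : (C ^ ((1:ℝ)/d) * qR ^ ((1:ℝ)/2 + 1/(2*(2*(d:ℝ)-1))))^(2*d-1)
        ≤ n^(2*d-1) := pow_le_pow_left₀ hM0 hn _
    have hcast : ((2*d-1 : ℕ) : ℝ) = 2*(d:ℝ) - 1 := by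
      rw [Nat.cast_sub (by omega), Nat.cast_mul, Nat.cast_ofNat, Nat.cast_one]
    have hdne : (d:ℝ) ≠ 0 := by linarith
    have h2dne : (2*(d:ℝ)-1) ≠ 0 := by linarith
    have hCpart : (C ^ ((1:ℝ)/d))^(2*d-1) = X := by
      rw [← Real.rpow_natCast (C ^ ((1:ℝ)/d)) (2*d-1), ← Real.rpow_mul hC0, hcast, hX]
      congr 1
      field_simp
      all_goals ring
    have hqpart : (qR ^ ((1:ℝ)/2 + 1/(2*(2*(d:ℝ)-1))))^(2*d-1) = qR^d := by
      rw [← Real.rpow_natCast (qR ^ _) (2*d-1), ← Real.rpow_mul (by linarith : (0:ℝ) ≤ qR),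
        hcast, ← Real.rpow_natCast qR d]
      congr 1
      field_simp
      all_goals ring
    calc X * qR^d = (C ^ ((1:ℝ)/d))^(2*d-1) * (qR ^ ((1:ℝ)/2 + 1/(2*(2*(d:ℝ)-1))))^(2*d-1) := by
          rw [hCpart, hqpart]
      _ = (C ^ ((1:ℝ)/d) * qR ^ ((1:ℝ)/2 + 1/(2*(2*(d:ℝ)-1))))^(2*d-1) := (mul_pow _ _ _).symm
      _ ≤ n^(2*d-1) := h1
  have hD : (0:ℝ) < n^(4*d) + qR^d * n^(2*d+1) := by positivity
  have hSc : n^(4*d)/Sig ≤ Sc := by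
    rw [div_le_iff₀ hSigpos]; exact hCS
  have hSig' : Sig ≤ (n^(4*d) + qR^d * n^(2*d+1))/qR := by
    rw [le_div_iff₀ hq0]; linarith [hSig]
  have hstep : n^(4*d) * qR / (n^(4*d) + qR^d * n^(2*d+1)) ≤ n^(4*d)/Sig := by
    rw [div_le_div_iff₀ hD hSigpos]
    nlinarith [pow_nonneg hn0 (4*d), hSig]
  have h5 : X * (qR^d * n^(2*d+1)) ≤ n^(4*d) := by
    have h6 : X * qR^d * n^(2*d+1) ≤ n^(2*d-1) * n^(2*d+1) :=
      mul_le_mul_of_nonneg_right hkey (by positivity)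
    calc X * (qR^d * n^(2*d+1)) = X * qR^d * n^(2*d+1) := by ring
      _ ≤ n^(2*d-1) * n^(2*d+1) := h6
      _ = n^(4*d) := by rw [← pow_add]; congr 1; omega
  have hlast : qR * X / (X+1) ≤ n^(4*d) * qR / (n^(4*d) + qR^d * n^(2*d+1)) := by
    rw [div_le_div_iff₀ (by positivity : (0:ℝ) < X+1) hD]
    nlinarith [mul_le_mul_of_nonneg_left h5 hq0.le]
  linarith [hlast, hstep, hSc]

end Aux1914

open Aux1914

set_option maxHeartbeats 1000000 in
/-- If `A ⊆ F_q` with `|A| ≥ C^(1/d) · q^(1/2 + 1/(2(2d-1)))` where `C ≥ 1`, then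
`|dA²| ≥ q · C^(2-1/d) / (C^(2-1/d) + 1)`. -/
theorem stmt_1 {F : Type*} [Field F] [Fintype F] (d : ℕ) (hd : 0 < d)
    (C : ℝ) (hC : 1 ≤ C) (A : Finset F)
    (hA : (A.card : ℝ) ≥
      C ^ ((1 : ℝ) / d) *
        (Fintype.card F : ℝ) ^ ((1 : ℝ) / 2 + 1 / (2 * (2 * (d : ℝ) - 1)))) :
    (Set.ncard {t : F | ∃ a a' : Fin d → F, (∀ i, a i ∈ A) ∧ (∀ i, a' i ∈ A) ∧
        t = ∑ i, a i * a' i} : ℝ) ≥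
      (Fintype.card F : ℝ) * C ^ ((2 : ℝ) - 1 / d) / (C ^ ((2 : ℝ) - 1 / d) + 1) := by
  classical
  obtain ⟨ψ, hψ1⟩ := (AddChar.exists_apply_ne_zero (a := (1:F))).mpr one_ne_zero
  have hψ : ψ.IsPrimitive := AddChar.IsPrimitive.of_ne_one
    (fun h => hψ1 (by rw [h, AddChar.one_apply]))
  have hq2 : 1 < Fintype.card F := Fintype.one_lt_card
  have hqR2 : (2:ℝ) ≤ (Fintype.card F : ℝ) := by exact_mod_cast hq2
  have hq0 : (0:ℝ) < (Fintype.card F : ℝ) := by linarith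
  have hd1 : (1:ℝ) ≤ (d:ℝ) := by exact_mod_cast hd
  have hnA : C ^ ((1:ℝ)/d) *
      (Fintype.card F : ℝ) ^ ((1:ℝ)/2 + 1/(2*(2*(d:ℝ)-1))) ≤ (A.card:ℝ) := hA
  have h2d1 : (1:ℝ) ≤ 2*(d:ℝ)-1 := by linarith
  have he0 : (0:ℝ) ≤ (1:ℝ)/2 + 1/(2*(2*(d:ℝ)-1)) := by positivity
  have hCd : (1:ℝ) ≤ C ^ ((1:ℝ)/d) := by
    have h := Real.rpow_le_rpow_of_exponent_le hC (show (0:ℝ) ≤ (1:ℝ)/d by positivity)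
    rwa [Real.rpow_zero] at h
  have hqe : (1:ℝ) ≤ (Fintype.card F : ℝ) ^ ((1:ℝ)/2 + 1/(2*(2*(d:ℝ)-1))) := by
    have h := Real.rpow_le_rpow_of_exponent_le (by linarith : (1:ℝ) ≤ (Fintype.card F:ℝ)) he0
    rwa [Real.rpow_zero] at h
  have hn1 : (1:ℝ) ≤ (A.card : ℝ) := le_trans (by nlinarith) hnA
  have hn0 : (0:ℝ) ≤ (A.card : ℝ) := by linarith
  have hq12 : (Fintype.card F : ℝ) ^ ((1:ℝ)/2) ≤ (A.card : ℝ) := by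
    have h1 : (Fintype.card F : ℝ) ^ ((1:ℝ)/2)
        ≤ (Fintype.card F : ℝ) ^ ((1:ℝ)/2 + 1/(2*(2*(d:ℝ)-1))) :=
      Real.rpow_le_rpow_of_exponent_le (by linarith)
        (by nlinarith [show (0:ℝ) < 1/(2*(2*(d:ℝ)-1)) by positivity])
    have h2 : (Fintype.card F : ℝ) ^ ((1:ℝ)/2 + 1/(2*(2*(d:ℝ)-1)))
        ≤ C ^ ((1:ℝ)/d) * (Fintype.card F : ℝ) ^ ((1:ℝ)/2 + 1/(2*(2*(d:ℝ)-1))) :=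
      le_mul_of_one_le_left (by positivity) hCd
    linarith
  have hqn : (Fintype.card F : ℝ) ≤ (A.card:ℝ)^2 := by
    have h2 : ((Fintype.card F : ℝ) ^ ((1:ℝ)/2))^2 ≤ (A.card:ℝ)^2 :=
      pow_le_pow_left₀ (by positivity) hq12 2
    have h3 : ((Fintype.card F : ℝ) ^ ((1:ℝ)/2))^2 = (Fintype.card F : ℝ) := by
      rw [← Real.rpow_natCast ((Fintype.card F : ℝ) ^ ((1:ℝ)/2)) 2,
        ← Real.rpow_mul hq0.le]
      norm_num
    linarith
  have hApos : A.Nonempty := Finset.card_pos.mp (by exact_mod_cast hn1)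
  -- definitions
  set Q : Finset (Fin d → F × F) := Fintype.piFinset (fun _ => A ×ˢ A) with hQdef
  set dt : (Fin d → F × F) → F := fun p => ∑ i, (p i).1 * (p i).2 with hdt
  set Nf : F → ℕ := fun t => (Q.filter fun p => dt p = t).card with hNfdef
  set S : Finset F := Q.image dt with hSdef
  have hsetEq : {t : F | ∃ a a' : Fin d → F, (∀ i, a i ∈ A) ∧ (∀ i, a' i ∈ A) ∧
      t = ∑ i, a i * a' i} = (S : Set F) := by
    ext t
    constructor
    · rintro ⟨a, a', ha, ha', rfl⟩
      exact Finset.mem_coe.mpr (Finset.mem_image.mpr ⟨fun i => (a i, a' i),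
        Fintype.mem_piFinset.mpr fun i => Finset.mem_product.mpr ⟨ha i, ha' i⟩, rfl⟩)
    · intro ht
      obtain ⟨p, hp, hpt⟩ := Finset.mem_image.mp ht
      rw [Fintype.mem_piFinset] at hp
      exact ⟨fun i => (p i).1, fun i => (p i).2,
        fun i => (Finset.mem_product.mp (hp i)).1,
        fun i => (Finset.mem_product.mp (hp i)).2, hpt.symm⟩
  rw [hsetEq, Set.ncard_coe_finset, ge_iff_le]
  have hQcard : Q.card = A.card ^ (2*d) := by
    rw [hQdef, Fintype.card_piFinset_const, Finset.card_product, pow_mul, sq]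
  -- Cauchy-Schwarz
  have hNsum : ∑ t ∈ S, Nf t = Q.card :=
    (Finset.card_eq_sum_card_fiberwise fun p hp => Finset.mem_image_of_mem dt hp).symm
  set Sig : ℝ := ∑ t : F, (Nf t : ℝ)^2 with hSigdef
  have hCS : (A.card:ℝ)^(4*d) ≤ (S.card : ℝ) * Sig := by
    have h1 : (∑ t ∈ S, (Nf t:ℝ))^2 ≤ (S.card : ℝ) * ∑ t ∈ S, (Nf t:ℝ)^2 :=
      sq_sum_le_card_mul_sum_sq
    have h2 : ∑ t ∈ S, (Nf t:ℝ)^2 ≤ Sig :=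
      Finset.sum_le_sum_of_subset_of_nonneg (Finset.subset_univ S)
        (fun _ _ _ => by positivity)
    have h3 : (∑ t ∈ S, (Nf t:ℝ)) = ((A.card:ℝ))^(2*d) := by
      rw [← Nat.cast_sum, hNsum, hQcard, Nat.cast_pow]
    calc (A.card:ℝ)^(4*d) = ((A.card:ℝ)^(2*d))^2 := by rw [← pow_mul]; congr 1; omega
      _ = (∑ t ∈ S, (Nf t:ℝ))^2 := by rw [h3]
      _ ≤ (S.card : ℝ) * ∑ t ∈ S, (Nf t:ℝ)^2 := h1
      _ ≤ (S.card : ℝ) * Sig := mul_le_mul_of_nonneg_left h2 (Nat.cast_nonneg _)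
  -- character sum setup
  set T : F → ℂ := fun s => ∑ z ∈ A ×ˢ A, ψ (s * (z.1 * z.2)) with hTdef
  have hTpow : ∀ s : F, ∑ p ∈ Q, ψ (s * dt p) = (T s)^d := by
    intro s
    have h1 : ∀ p : Fin d → F × F, ψ (s * dt p)
        = ∏ i : Fin d, ψ (s * ((p i).1 * (p i).2)) := by
      intro p
      rw [hdt]
      simp only
      rw [Finset.mul_sum, addChar_map_sum]
    simp_rw [h1]
    rw [hQdef]
    calc ∑ x ∈ Fintype.piFinset (fun _ : Fin d => A ×ˢ A),
          ∏ i : Fin d, ψ (s * ((x i).1 * (x i).2))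
        = ∏ _i : Fin d, ∑ z ∈ A ×ˢ A, ψ (s * (z.1 * z.2)) :=
          (Finset.prod_univ_sum (fun _ : Fin d => A ×ˢ A)
            (fun _ z => ψ (s * (z.1 * z.2)))).symm
      _ = (T s)^d := by
          rw [Finset.prod_const, Finset.card_univ, Fintype.card_fin]
  have hcount : Sig = (((Q ×ˢ Q).filter fun z => dt z.1 = dt z.2).card : ℝ) := by
    rw [hSigdef, count_pairs Q dt]
    push_cast
    rfl
  have hmain0 : ∑ s : F, (Complex.normSq (T s))^d = (Fintype.card F : ℝ) * Sig := by
    rw [hcount, ← energy_eq Q dt hψ]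
    refine Finset.sum_congr rfl fun s _ => ?_
    rw [hTpow s, map_pow]
  have hT0 : Complex.normSq (T 0) = (A.card:ℝ)^4 := by
    have h1 : T 0 = ((A.card : ℂ))^2 := by
      rw [hTdef]
      simp only [zero_mul, AddChar.map_zero_eq_one, Finset.sum_const, Finset.card_product,
        nsmul_eq_mul, mul_one]
      push_cast
      ring
    rw [h1, map_pow, Complex.normSq_natCast]
    ring
  -- pointwise max bound for s ≠ 0
  have hmax : ∀ s : F, s ≠ 0 →
      Complex.normSq (T s) ≤ (Fintype.card F : ℝ) * (A.card:ℝ)^2 := by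
    intro s hs
    have hTs : T s = ∑ a ∈ A, ∑ b ∈ A, ψ (s * (a * b)) := by
      rw [hTdef]
      simp only
      rw [Finset.sum_product]
    have hnorm1 : ‖T s‖ ≤ ∑ a ∈ A, ‖∑ b ∈ A, ψ (s * (a * b))‖ := by
      rw [hTs]; exact norm_sum_le _ _
    have hCS2 : (∑ a ∈ A, ‖∑ b ∈ A, ψ (s * (a * b))‖)^2
        ≤ (A.card:ℝ) * ∑ a ∈ A, ‖∑ b ∈ A, ψ (s * (a * b))‖^2 := sq_sum_le_card_mul_sum_sq
    have hre : ∀ a : F, ‖∑ b ∈ A, ψ (s * (a * b))‖^2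
        = Complex.normSq (∑ b ∈ A, ψ (a * (s * b))) := by
      intro a
      have hsum : (∑ b ∈ A, ψ (s * (a * b))) = ∑ b ∈ A, ψ (a * (s * b)) :=
        Finset.sum_congr rfl fun b _ => by rw [mul_left_comm]
      rw [← Complex.normSq_eq_norm_sq, hsum]
    have hsub : ∑ a ∈ A, ‖∑ b ∈ A, ψ (s * (a * b))‖^2
        ≤ ∑ a : F, Complex.normSq (∑ b ∈ A, ψ (a * (s * b))) := by
      simp_rw [hre]
      exact Finset.sum_le_sum_of_subset_of_nonneg (Finset.subset_univ A)
        (fun _ _ _ => Complex.normSq_nonneg _)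
    have hdiag : (((A ×ˢ A)).filter fun z => s * z.1 = s * z.2).card = A.card := by
      have heq : ((A ×ˢ A).filter fun z => s * z.1 = s * z.2)
          = (A ×ˢ A).filter fun z => z.1 = z.2 :=
        Finset.filter_congr fun z _ => mul_right_inj' hs
      rw [heq]
      apply Finset.card_bij (fun (z : F × F) _ => z.1)
      · intro z hz; exact (Finset.mem_product.mp (Finset.mem_filter.mp hz).1).1
      · intro z hz w hw h
        have hz2 := (Finset.mem_filter.mp hz).2
        have hw2 := (Finset.mem_filter.mp hw).2
        exact Prod.ext h (by rw [← hz2, ← hw2]; exact h)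
      · intro a ha
        exact ⟨(a,a), Finset.mem_filter.mpr ⟨Finset.mem_product.mpr ⟨ha, ha⟩, rfl⟩, rfl⟩
    have hcomplete : ∑ a : F, Complex.normSq (∑ b ∈ A, ψ (a * (s * b)))
        = (Fintype.card F : ℝ) * (A.card : ℝ) := by
      rw [energy_eq A (fun b => s * b) hψ, hdiag]
    have hTnn : 0 ≤ ∑ a ∈ A, ‖∑ b ∈ A, ψ (s * (a * b))‖ :=
      Finset.sum_nonneg fun _ _ => norm_nonneg _
    have h5 : Complex.normSq (T s) = ‖T s‖^2 := by
      rw [← Complex.normSq_eq_norm_sq]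
    calc Complex.normSq (T s) = ‖T s‖^2 := h5
      _ ≤ (∑ a ∈ A, ‖∑ b ∈ A, ψ (s * (a * b))‖)^2 :=
          pow_le_pow_left₀ (norm_nonneg _) hnorm1 2
      _ ≤ (A.card:ℝ) * ∑ a ∈ A, ‖∑ b ∈ A, ψ (s * (a * b))‖^2 := hCS2
      _ ≤ (A.card:ℝ) * ((Fintype.card F : ℝ) * (A.card : ℝ)) := by
          rw [← hcomplete]
          exact mul_le_mul_of_nonneg_left hsub hn0
      _ = (Fintype.card F : ℝ) * (A.card:ℝ)^2 := by ring
  -- total energy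
  set Ecard : ℕ :=
    (((A ×ˢ A) ×ˢ (A ×ˢ A)).filter fun z => z.1.1 * z.1.2 = z.2.1 * z.2.2).card with hEdef
  have hEtot : ∑ s : F, Complex.normSq (T s) = (Fintype.card F : ℝ) * (Ecard : ℝ) :=
    energy_eq (A ×ˢ A) (fun z => z.1 * z.2) hψ
  have hEbound := energy_card_bound A hqn
  have herase : ∑ s ∈ Finset.univ.erase (0:F), Complex.normSq (T s)
      = (Fintype.card F:ℝ) * (Ecard:ℝ) - (A.card:ℝ)^4 := by
    have h1 : Complex.normSq (T 0) + ∑ s ∈ Finset.univ.erase (0:F), Complex.normSq (T s)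
        = ∑ s : F, Complex.normSq (T s) :=
      Finset.add_sum_erase Finset.univ (fun s : F => Complex.normSq (T s))
        (Finset.mem_univ (0:F))
    rw [hEtot] at h1
    linarith [hT0]
  -- the main second-moment bound
  have hmainBound : (Fintype.card F:ℝ) * Sig
      ≤ (A.card:ℝ)^(4*d) + (Fintype.card F:ℝ)^d * (A.card:ℝ)^(2*d+1) := by
    rw [← hmain0]
    have hsplit : ∑ s : F, (Complex.normSq (T s))^d
        = (Complex.normSq (T 0))^d
          + ∑ s ∈ Finset.univ.erase (0:F), (Complex.normSq (T s))^d :=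
      (Finset.add_sum_erase Finset.univ (fun s : F => (Complex.normSq (T s))^d)
        (Finset.mem_univ (0:F))).symm
    rw [hsplit, hT0]
    have h40 : ((A.card:ℝ)^4)^d = (A.card:ℝ)^(4*d) := by rw [← pow_mul]
    have hper : ∀ s ∈ Finset.univ.erase (0:F), (Complex.normSq (T s))^d
        ≤ ((Fintype.card F:ℝ) * (A.card:ℝ)^2)^(d-1) * Complex.normSq (T s) := by
      intro s hs
      have hs0 : s ≠ 0 := (Finset.mem_erase.mp hs).1
      have hx0 : 0 ≤ Complex.normSq (T s) := Complex.normSq_nonneg _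
      calc (Complex.normSq (T s))^d
          = (Complex.normSq (T s))^(d-1) * Complex.normSq (T s) := by
            conv_lhs => rw [show d = (d-1)+1 by omega]
            rw [pow_succ]
        _ ≤ ((Fintype.card F:ℝ) * (A.card:ℝ)^2)^(d-1) * Complex.normSq (T s) :=
            mul_le_mul_of_nonneg_right (pow_le_pow_left₀ hx0 (hmax s hs0) _) hx0
    have hsum2 : ∑ s ∈ Finset.univ.erase (0:F), (Complex.normSq (T s))^d
        ≤ ((Fintype.card F:ℝ) * (A.card:ℝ)^2)^(d-1)
          * ((Fintype.card F:ℝ) * (Ecard:ℝ) - (A.card:ℝ)^4) := by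
      calc ∑ s ∈ Finset.univ.erase (0:F), (Complex.normSq (T s))^d
          ≤ ∑ s ∈ Finset.univ.erase (0:F),
            ((Fintype.card F:ℝ) * (A.card:ℝ)^2)^(d-1) * Complex.normSq (T s) :=
            Finset.sum_le_sum hper
        _ = ((Fintype.card F:ℝ) * (A.card:ℝ)^2)^(d-1)
            * ∑ s ∈ Finset.univ.erase (0:F), Complex.normSq (T s) := by
            rw [Finset.mul_sum]
        _ = _ := by rw [herase]
    have hE3 : (Fintype.card F:ℝ) * (Ecard:ℝ) - (A.card:ℝ)^4
        ≤ (Fintype.card F:ℝ) * (A.card:ℝ)^3 := by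
      have := hEbound
      rw [← hEdef] at this
      linarith
    have hM0 : (0:ℝ) ≤ ((Fintype.card F:ℝ) * (A.card:ℝ)^2)^(d-1) := by positivity
    have hfinal : ((Fintype.card F:ℝ) * (A.card:ℝ)^2)^(d-1)
        * ((Fintype.card F:ℝ) * (A.card:ℝ)^3)
        = (Fintype.card F:ℝ)^d * (A.card:ℝ)^(2*d+1) := by
      rw [mul_pow, ← pow_mul]
      have e1 : (Fintype.card F:ℝ)^(d-1) * (Fintype.card F:ℝ) = (Fintype.card F:ℝ)^d := by
        rw [← pow_succ]; congr 1; omega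
      have e2 : (A.card:ℝ)^(2*(d-1)) * (A.card:ℝ)^3 = (A.card:ℝ)^(2*d+1) := by
        rw [← pow_add]; congr 1; omega
      calc (Fintype.card F:ℝ)^(d-1) * (A.card:ℝ)^(2*(d-1))
            * ((Fintype.card F:ℝ) * (A.card:ℝ)^3)
          = ((Fintype.card F:ℝ)^(d-1) * (Fintype.card F:ℝ))
            * ((A.card:ℝ)^(2*(d-1)) * (A.card:ℝ)^3) := by ring
        _ = (Fintype.card F:ℝ)^d * (A.card:ℝ)^(2*d+1) := by rw [e1, e2]
    calc ((A.card:ℝ)^4)^d + ∑ s ∈ Finset.univ.erase (0:F), (Complex.normSq (T s))^d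
        ≤ (A.card:ℝ)^(4*d) + ((Fintype.card F:ℝ) * (A.card:ℝ)^2)^(d-1)
          * ((Fintype.card F:ℝ) * (Ecard:ℝ) - (A.card:ℝ)^4) := by
          rw [h40]; linarith [hsum2]
      _ ≤ (A.card:ℝ)^(4*d) + ((Fintype.card F:ℝ) * (A.card:ℝ)^2)^(d-1)
          * ((Fintype.card F:ℝ) * (A.card:ℝ)^3) := by
          have := mul_le_mul_of_nonneg_left hE3 hM0
          linarith
      _ = (A.card:ℝ)^(4*d) + (Fintype.card F:ℝ)^d * (A.card:ℝ)^(2*d+1) := by rw [hfinal]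
  -- positivity of Sig
  have hSigpos : 0 < Sig := by
    have hQne : Q.Nonempty := by
      rw [hQdef]
      exact Fintype.piFinset_nonempty.mpr fun _ =>
        Finset.Nonempty.product hApos hApos
    obtain ⟨p0, hp0⟩ := hQne
    have h1 : 0 < Nf (dt p0) :=
      Finset.card_pos.mpr ⟨p0, Finset.mem_filter.mpr ⟨hp0, rfl⟩⟩
    have h2 : (0:ℝ) < (Nf (dt p0):ℝ)^2 := by
      have : (0:ℝ) < (Nf (dt p0):ℝ) := by exact_mod_cast h1
      positivity
    rw [hSigdef]
    exact Finset.sum_pos' (fun t _ => by positivity) ⟨dt p0, Finset.mem_univ _, h2⟩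
  exact endgame d hd C (Fintype.card F : ℝ) (A.card : ℝ) (S.card : ℝ) Sig
    hC hqR2 hnA hCS hmainBound hSigpos
end

section
/- Let q be a prime power, F_q the finite field with q elements, and C ≥ 1 a real constant. If A ⊆ F_q satisfies |A| ≥ C^(1/2) · q^(2/3), then |A² + A²| ≥ q · C^(3/2) / (C^(3/2) + 1). -/
open Finset
set_option linter.unusedSectionVars false
set_option linter.deprecated false
set_option maxHeartbeats 1000000

section
variable {F : Type*} [Field F] [Fintype F] [DecidableEq F]


private lemma aux_conj (hR : 0 < ringChar F) (ψ : AddChar F ℂ) (a : F) :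
    (starRingEnd ℂ) (ψ a) = ψ (-a) := by
  rw [AddChar.starComp_apply hR, AddChar.inv_apply]

private lemma aux_orth (ψ : AddChar F ℂ) (hψ : ψ.IsPrimitive) (u v : F) :
    ∑ x : F, ψ (x * u) * ψ (-(x * v)) = if u = v then (Fintype.card F : ℂ) else 0 := by
  have h : ∀ x : F, ψ (x * u) * ψ (-(x * v)) = ψ (x * (u - v)) := fun x => by
    rw [← AddChar.map_add_eq_mul]; congr 1; ring
  simp_rw [h]
  rw [AddChar.sum_mulShift _ hψ]
  simp [sub_eq_zero]

private lemma aux_pair (ψ : AddChar F ℂ) (hψ : ψ.IsPrimitive) {ι κ : Type*} [DecidableEq ι] [DecidableEq κ]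
    (s : Finset ι) (t : Finset κ) (u : ι → F) (v : κ → F) :
    ∑ x : F, ((∑ i ∈ s, ψ (x * u i)) * (∑ j ∈ t, ψ (-(x * v j)))) =
      (Fintype.card F : ℂ) * (((s ×ˢ t).filter fun z => u z.1 = v z.2).card : ℂ) := by
  simp_rw [Finset.sum_mul_sum]
  rw [Finset.sum_comm]
  have e2 : ∀ i ∈ s, ∑ x : F, ∑ j ∈ t, ψ (x * u i) * ψ (-(x * v j)) =
      ∑ j ∈ t, if u i = v j then (Fintype.card F : ℂ) else 0 := by
    intro i _
    rw [Finset.sum_comm]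
    exact Finset.sum_congr rfl fun j _ => aux_orth ψ hψ (u i) (v j)
  rw [Finset.sum_congr rfl e2, ← Finset.sum_product']
  rw [Finset.sum_ite, Finset.sum_const, Finset.sum_const_zero, add_zero, nsmul_eq_mul, mul_comm]

private lemma aux_vanish (ψ : AddChar F ℂ) (hψ : ψ.IsPrimitive) {ι κ : Type*}
    (s : Finset ι) (t : Finset κ) (u : ι → F) (v : κ → F)
    (h : ∀ i ∈ s, ∀ i' ∈ s, ∀ j ∈ t, u i + u i' ≠ v j) :
    ∑ x : F, ((∑ i ∈ s, ψ (x * u i)) * (∑ i' ∈ s, ψ (x * u i')) * (∑ j ∈ t, ψ (-(x * v j)))) = 0 := by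
  have e1 : ∀ x : F, (∑ i ∈ s, ψ (x * u i)) * (∑ i' ∈ s, ψ (x * u i')) * (∑ j ∈ t, ψ (-(x * v j)))
      = ∑ i ∈ s, ∑ i' ∈ s, ∑ j ∈ t, ψ (x * (u i + u i' - v j)) := by
    intro x
    rw [Finset.sum_mul_sum, Finset.sum_mul]
    refine Finset.sum_congr rfl fun i _ => ?_
    rw [Finset.sum_mul]
    refine Finset.sum_congr rfl fun i' _ => ?_
    rw [Finset.mul_sum]
    refine Finset.sum_congr rfl fun j _ => ?_
    rw [← AddChar.map_add_eq_mul, ← AddChar.map_add_eq_mul]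
    congr 1; ring
  simp_rw [e1]
  rw [Finset.sum_comm]
  refine Finset.sum_eq_zero fun i hi => ?_
  rw [Finset.sum_comm]
  refine Finset.sum_eq_zero fun i' hi' => ?_
  rw [Finset.sum_comm]
  refine Finset.sum_eq_zero fun j hj => ?_
  rw [AddChar.sum_mulShift _ hψ, if_neg (sub_ne_zero.mpr (h i hi i' hi' j hj)), Nat.cast_zero]

private lemma aux_pair_real (ψ : AddChar F ℂ) (hψ : ψ.IsPrimitive) (hR : 0 < ringChar F)
    {ι : Type*} [DecidableEq ι] (s : Finset ι) (u : ι → F) :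
    ∑ x : F, ‖∑ i ∈ s, ψ (x * u i)‖ ^ 2 =
      (Fintype.card F : ℝ) * (((s ×ˢ s).filter fun z => u z.1 = u z.2).card : ℝ) := by
  have key := aux_pair ψ hψ s s u u
  have e : ∀ x : F, ((‖∑ i ∈ s, ψ (x * u i)‖ ^ 2 : ℝ) : ℂ)
      = (∑ i ∈ s, ψ (x * u i)) * (∑ j ∈ s, ψ (-(x * u j))) := by
    intro x
    have hconj : (∑ j ∈ s, ψ (-(x * u j))) = (starRingEnd ℂ) (∑ i ∈ s, ψ (x * u i)) := by
      rw [map_sum]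
      exact Finset.sum_congr rfl fun j _ => (aux_conj hR ψ _).symm
    rw [hconj, Complex.mul_conj, Complex.normSq_eq_norm_sq]
  apply Complex.ofReal_injective
  rw [Complex.ofReal_sum]
  rw [Finset.sum_congr rfl (fun x _ => e x), key]
  push_cast; ring

private lemma aux_diag {ι : Type*} [DecidableEq ι] (s : Finset ι) :
    ((s ×ˢ s).filter fun z => z.1 = z.2).card = s.card := by
  have h : ((s ×ˢ s).filter fun z => z.1 = z.2) = s.image (fun a => (a, a)) := by
    ext z
    simp only [Finset.mem_filter, Finset.mem_product, Finset.mem_image]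
    constructor
    · rintro ⟨⟨h1, _⟩, h3⟩
      exact ⟨z.1, h1, by rw [Prod.ext_iff]; exact ⟨rfl, h3⟩⟩
    · rintro ⟨a, ha, rfl⟩
      exact ⟨⟨ha, ha⟩, rfl⟩
  rw [h, Finset.card_image_of_injective _ (fun a b hab => congrArg Prod.fst hab)]

private lemma aux_point (ψ : AddChar F ℂ) (hψ : ψ.IsPrimitive) (hR : 0 < ringChar F)
    (A : Finset F) {x : F} (hx : x ≠ 0) :
    ‖∑ p ∈ A ×ˢ A, ψ (x * (p.1 * p.2))‖ ^ 2 ≤ (Fintype.card F : ℝ) * (A.card : ℝ) ^ 2 := by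
  have h1 : ‖∑ p ∈ A ×ˢ A, ψ (x * (p.1 * p.2))‖ ≤ ∑ a ∈ A, ‖∑ b ∈ A, ψ (x * (a * b))‖ := by
    rw [Finset.sum_product]
    exact norm_sum_le _ _
  have h2 : (∑ a ∈ A, ‖∑ b ∈ A, ψ (x * (a * b))‖) ^ 2
      ≤ (A.card : ℝ) * ∑ a ∈ A, ‖∑ b ∈ A, ψ (x * (a * b))‖ ^ 2 :=
    sq_sum_le_card_mul_sum_sq
  have h3 : ∑ a ∈ A, ‖∑ b ∈ A, ψ (x * (a * b))‖ ^ 2 ≤ ∑ y : F, ‖∑ b ∈ A, ψ (y * b)‖ ^ 2 := by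
    have e : ∀ a ∈ A, ‖∑ b ∈ A, ψ (x * (a * b))‖ ^ 2 = ‖∑ b ∈ A, ψ ((x * a) * b)‖ ^ 2 := by
      intro a _
      congr 2
      exact Finset.sum_congr rfl fun b _ => by rw [mul_assoc]
    rw [Finset.sum_congr rfl e]
    have hinj : ∀ a ∈ A, ∀ a' ∈ A, x * a = x * a' → a = a' := fun a _ a' _ h =>
      mul_left_cancel₀ hx h
    have himg : ∑ y ∈ A.image (fun a => x * a), ‖∑ b ∈ A, ψ (y * b)‖ ^ 2
        = ∑ a ∈ A, ‖∑ b ∈ A, ψ (x * a * b)‖ ^ 2 := Finset.sum_image hinj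
    rw [← himg]
    exact Finset.sum_le_sum_of_subset_of_nonneg (Finset.subset_univ _)
      (fun _ _ _ => sq_nonneg _)
  have h4 : ∑ y : F, ‖∑ b ∈ A, ψ (y * b)‖ ^ 2 = (Fintype.card F : ℝ) * (A.card : ℝ) := by
    have h5 := aux_pair_real ψ hψ hR A (fun b => b)
    rw [h5, aux_diag]
  calc ‖∑ p ∈ A ×ˢ A, ψ (x * (p.1 * p.2))‖ ^ 2
      ≤ (∑ a ∈ A, ‖∑ b ∈ A, ψ (x * (a * b))‖) ^ 2 := by
        apply pow_le_pow_left₀ (norm_nonneg _) h1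
    _ ≤ (A.card : ℝ) * ∑ a ∈ A, ‖∑ b ∈ A, ψ (x * (a * b))‖ ^ 2 := h2
    _ ≤ (A.card : ℝ) * ∑ y : F, ‖∑ b ∈ A, ψ (y * b)‖ ^ 2 :=
        mul_le_mul_of_nonneg_left h3 (Nat.cast_nonneg _)
    _ = (A.card : ℝ) * ((Fintype.card F : ℝ) * (A.card : ℝ)) := by rw [h4]
    _ = (Fintype.card F : ℝ) * (A.card : ℝ) ^ 2 := by ring

private lemma aux_count (A : Finset F) :
    (((A ×ˢ A) ×ˢ (A ×ˢ A)).filter fun z => z.1.1 * z.1.2 = z.2.1 * z.2.2).card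
      ≤ A.card ^ 3 + A.card ^ 2 := by
  classical
  set P := A ×ˢ A with hP
  set n := A.card with hn
  have hM : ((P ×ˢ P).filter fun z => z.1.1 * z.1.2 = z.2.1 * z.2.2).card
      = ∑ p ∈ P, (((P ×ˢ P).filter fun z => z.1.1 * z.1.2 = z.2.1 * z.2.2).filter
          fun z => z.1 = p).card :=
    Finset.card_eq_sum_card_fiberwise
      (fun z hz => (Finset.mem_product.1 (Finset.mem_filter.1 hz).1).1)
  have hfiber : ∀ p ∈ P, (((P ×ˢ P).filter fun z => z.1.1 * z.1.2 = z.2.1 * z.2.2).filter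
      fun z => z.1 = p).card ≤ (P.filter fun r => p.1 * p.2 = r.1 * r.2).card := by
    intro p hp
    apply Finset.card_le_card_of_injOn (fun z => z.2)
    · intro z hz
      rw [Finset.mem_coe, Finset.mem_filter] at hz ⊢
      obtain ⟨hz1, hz1p⟩ := hz
      rw [Finset.mem_filter, Finset.mem_product] at hz1
      exact ⟨hz1.1.2, by rw [← hz1p]; exact hz1.2⟩
    · intro z hz z' hz' h2
      have e1 : z.1 = p := (Finset.mem_filter.1 hz).2
      have e1' : z'.1 = p := (Finset.mem_filter.1 hz').2
      exact Prod.ext (e1.trans e1'.symm) h2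
  have hsum : ((P ×ˢ P).filter fun z => z.1.1 * z.1.2 = z.2.1 * z.2.2).card
      ≤ ∑ p ∈ P, (P.filter fun r => p.1 * p.2 = r.1 * r.2).card := by
    rw [hM]; exact Finset.sum_le_sum hfiber
  set z₀ := (P.filter fun r => (0 : F) = r.1 * r.2).card with hz₀
  -- split the sum according to whether p.1 * p.2 = 0
  have hsplit : ∑ p ∈ P, (P.filter fun r => p.1 * p.2 = r.1 * r.2).card
      = ∑ p ∈ P.filter (fun p => p.1 * p.2 = 0),
          (P.filter fun r => p.1 * p.2 = r.1 * r.2).card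
        + ∑ p ∈ P.filter (fun p => ¬ p.1 * p.2 = 0),
          (P.filter fun r => p.1 * p.2 = r.1 * r.2).card :=
    (Finset.sum_filter_add_sum_filter_not P _ _).symm
  have hcard0 : (P.filter fun p => p.1 * p.2 = 0).card = z₀ := by
    rw [hz₀]; congr 1; apply Finset.filter_congr; intro p _; simp [eq_comm]
  have hfirst : ∑ p ∈ P.filter (fun p => p.1 * p.2 = 0),
      (P.filter fun r => p.1 * p.2 = r.1 * r.2).card = z₀ * z₀ := by
    have : ∀ p ∈ P.filter (fun p => p.1 * p.2 = 0),
        (P.filter fun r => p.1 * p.2 = r.1 * r.2).card = z₀ := by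
      intro p hp
      have h0 : p.1 * p.2 = 0 := (Finset.mem_filter.1 hp).2
      rw [hz₀]; congr 1; apply Finset.filter_congr; intro r _; rw [h0]
    rw [Finset.sum_congr rfl this, Finset.sum_const, hcard0, smul_eq_mul]
  have hvne : ∀ v : F, v ≠ 0 → (P.filter fun r => v = r.1 * r.2).card ≤ (A.erase 0).card := by
    intro v hv
    apply Finset.card_le_card_of_injOn (fun r => r.1)
    · intro r hr
      rw [Finset.mem_coe, Finset.mem_filter, Finset.mem_product] at hr
      rw [Finset.mem_coe, Finset.mem_erase]
      refine ⟨fun h0 => hv ?_, hr.1.1⟩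
      rw [hr.2, show r.1 = 0 from h0, zero_mul]
    · intro r hr r' hr' h1
      have h1' : r.1 = r'.1 := h1
      have h2 : v = r.1 * r.2 := (Finset.mem_filter.1 hr).2
      have h2' : v = r'.1 * r'.2 := (Finset.mem_filter.1 hr').2
      have hr10 : r.1 ≠ 0 := fun h0 => hv (by rw [h2, h0, zero_mul])
      refine Prod.ext h1' (mul_left_cancel₀ hr10 ?_)
      rw [← h2, h1', ← h2']
  have hsecond : ∑ p ∈ P.filter (fun p => ¬ p.1 * p.2 = 0),
      (P.filter fun r => p.1 * p.2 = r.1 * r.2).card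
      ≤ (P.filter fun p => ¬ p.1 * p.2 = 0).card * (A.erase 0).card := by
    apply Finset.sum_le_card_nsmul
    intro p hp
    exact hvne _ (Finset.mem_filter.1 hp).2
  have hkz : (P.filter fun p => ¬ p.1 * p.2 = 0).card + z₀ = n * n := by
    rw [← hcard0, add_comm, Finset.card_filter_add_card_filter_not, hP,
      Finset.card_product]
  have htot : ((P ×ˢ P).filter fun z => z.1.1 * z.1.2 = z.2.1 * z.2.2).card
      ≤ z₀ * z₀ + (P.filter fun p => ¬ p.1 * p.2 = 0).card * (A.erase 0).card := by
    calc _ ≤ _ := hsum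
      _ = _ := hsplit
      _ ≤ _ := by exact add_le_add hfirst.le hsecond
  by_cases h0A : (0 : F) ∈ A
  · -- sharp bounds
    have h1n : 1 ≤ A.card := Finset.card_pos.2 ⟨0, h0A⟩
    have he : (A.erase 0).card + 1 = n := by
      rw [Finset.card_erase_of_mem h0A, hn]
      omega
    have hz1 : z₀ + 1 ≤ 2 * n := by
      have hsub : (P.filter fun r => (0 : F) = r.1 * r.2) ⊆ ({(0 : F)} ×ˢ A) ∪ (A ×ˢ {(0 : F)}) := by
        intro r hr
        rw [Finset.mem_filter, Finset.mem_product] at hr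
        rcases mul_eq_zero.1 hr.2.symm with h | h
        · apply Finset.mem_union_left
          rw [Finset.mem_product, Finset.mem_singleton]
          exact ⟨h, hr.1.2⟩
        · apply Finset.mem_union_right
          rw [Finset.mem_product, Finset.mem_singleton]
          exact ⟨hr.1.1, h⟩
      have hu := Finset.card_union_add_card_inter ({(0 : F)} ×ˢ A) (A ×ˢ {(0 : F)})
      have hi : 1 ≤ ((({(0 : F)} ×ˢ A)) ∩ (A ×ˢ {(0 : F)})).card := by
        apply Finset.card_pos.2
        refine ⟨((0 : F), (0 : F)), ?_⟩
        rw [Finset.mem_inter]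
        constructor <;> (rw [Finset.mem_product]; simp [h0A])
      have hz' : z₀ ≤ ((({(0 : F)} ×ˢ A)) ∪ (A ×ˢ {(0 : F)})).card := Finset.card_le_card hsub
      rw [Finset.card_product, Finset.card_product, Finset.card_singleton] at hu
      rw [hn]
      omega
    set k := (P.filter fun p => ¬ p.1 * p.2 = 0).card with hk
    set e := (A.erase 0).card with heq
    have hz1' : (z₀ : ℤ) + 1 ≤ 2 * (n : ℤ) := by exact_mod_cast hz1
    have hkz' : (k : ℤ) + z₀ = (n : ℤ) * (n : ℤ) := by exact_mod_cast hkz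
    have he' : (e : ℤ) + 1 = (n : ℤ) := by exact_mod_cast he
    have htot' : ((((P ×ˢ P).filter fun z => z.1.1 * z.1.2 = z.2.1 * z.2.2).card : ℤ))
        ≤ (z₀ : ℤ) * z₀ + (k : ℤ) * e := by exact_mod_cast htot
    have hkeq : (k : ℤ) = (n : ℤ) * n - z₀ := by linarith
    have heeq : (e : ℤ) = (n : ℤ) - 1 := by linarith
    have hke : (k : ℤ) * e = ((n : ℤ) * n - z₀) * ((n : ℤ) - 1) := by rw [hkeq, heeq]
    have p1 : (0 : ℤ) ≤ (z₀ : ℤ) * (2 * (n : ℤ) - 1 - z₀) :=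
      mul_nonneg (by positivity) (by omega)
    have p2 : (0 : ℤ) ≤ (n : ℤ) * (2 * (n : ℤ) - 1 - z₀) :=
      mul_nonneg (by positivity) (by omega)
    have final' : ((((P ×ˢ P).filter fun z => z.1.1 * z.1.2 = z.2.1 * z.2.2).card : ℤ))
        ≤ (n : ℤ) ^ 3 + (n : ℤ) ^ 2 := by nlinarith [htot', p1, p2, hke]
    exact_mod_cast final'
  · have hz0 : z₀ = 0 := by
      rw [hz₀, Finset.card_eq_zero, Finset.filter_eq_empty_iff]
      intro r hr
      rw [Finset.mem_product] at hr
      have h1 : r.1 ≠ 0 := fun h => h0A (h ▸ hr.1)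
      have h2 : r.2 ≠ 0 := fun h => h0A (h ▸ hr.2)
      exact fun hc => (mul_ne_zero h1 h2) hc.symm
    have hk : (P.filter fun p => ¬ p.1 * p.2 = 0).card ≤ n * n := by omega
    have he : (A.erase 0).card ≤ n := Finset.card_le_card (Finset.erase_subset _ _)
    have step : z₀ * z₀ + (P.filter fun p => ¬ p.1 * p.2 = 0).card * (A.erase 0).card
        ≤ n * n * n := by
      rw [hz0]
      simpa using Nat.mul_le_mul hk he
    refine htot.trans (step.trans ?_)
    have hnn : n * n * n = n ^ 3 := by ring
    rw [hnn]
    exact Nat.le_add_right _ _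
end

/-- If `A ⊆ F_q` with `|A| ≥ C^(1/2) · q^(2/3)` where `C ≥ 1`, then
`|A² + A²| ≥ q · C^(3/2) / (C^(3/2) + 1)`. -/
theorem stmt_3 {F : Type*} [Field F] [Fintype F] (C : ℝ) (hC : 1 ≤ C)
    (A : Finset F)
    (hA : (A.card : ℝ) ≥ C ^ ((1 : ℝ) / 2) * (Fintype.card F : ℝ) ^ ((2 : ℝ) / 3)) :
    (Set.ncard {t : F | ∃ a ∈ A, ∃ b ∈ A, ∃ c ∈ A, ∃ e ∈ A, t = a * b + c * e} : ℝ) ≥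
      (Fintype.card F : ℝ) * C ^ ((3 : ℝ) / 2) / (C ^ ((3 : ℝ) / 2) + 1) := by
  classical
  -- character setup
  have hR : 0 < ringChar F := Nat.pos_of_ne_zero (CharP.ringChar_ne_zero_of_finite F)
  set ψ := AddChar.FiniteField.primitiveChar_to_Complex F with hψdef
  have hψ : ψ.IsPrimitive := AddChar.FiniteField.primitiveChar_to_Complex_isPrimitive F
  clear_value ψ
  clear hψdef
  -- the sumset as a finset
  set S : Finset F := Finset.univ.filter
      (fun t => ∃ a ∈ A, ∃ b ∈ A, ∃ c ∈ A, ∃ e ∈ A, t = a * b + c * e) with hSdef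
  have hsetS : {t : F | ∃ a ∈ A, ∃ b ∈ A, ∃ c ∈ A, ∃ e ∈ A, t = a * b + c * e} = ↑S := by
    ext t; simp [hSdef]
  rw [hsetS, Set.ncard_coe_finset]
  set T := Sᶜ with hTdef
  -- real quantities
  set Q : ℝ := (Fintype.card F : ℝ) with hQdef
  set N : ℝ := (A.card : ℝ) with hNdef
  set Tc : ℝ := (T.card : ℝ) with hTcdef
  set c : ℝ := C ^ ((3 : ℝ) / 2) with hcdef
  have hC0 : (0 : ℝ) ≤ C := le_trans zero_le_one hC
  have hc1 : (1 : ℝ) ≤ c := Real.one_le_rpow hC (by norm_num)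
  have hq2 : 1 < Fintype.card F := Fintype.one_lt_card
  have hQ2 : (2 : ℝ) ≤ Q := by rw [hQdef]; exact_mod_cast hq2
  have hQ0 : (0 : ℝ) < Q := by linarith
  have hN0 : (0 : ℝ) ≤ N := Nat.cast_nonneg _
  have hTc0 : (0 : ℝ) ≤ Tc := Nat.cast_nonneg _
  have hNQ : N ≤ Q := by rw [hNdef, hQdef]; exact_mod_cast Finset.card_le_univ A
  have hcub : c * Q ^ 2 ≤ N ^ 3 := by
    have h1 : (C ^ ((1 : ℝ) / 2) * Q ^ ((2 : ℝ) / 3)) ^ (3 : ℕ) ≤ N ^ (3 : ℕ) :=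
      pow_le_pow_left₀ (by positivity) hA 3
    have h2 : (C ^ ((1 : ℝ) / 2)) ^ (3 : ℕ) = c := by
      rw [← Real.rpow_natCast (C ^ ((1 : ℝ) / 2)) 3, ← Real.rpow_mul hC0, hcdef]
      norm_num
    have h3 : (Q ^ ((2 : ℝ) / 3)) ^ (3 : ℕ) = Q ^ 2 := by
      rw [← Real.rpow_natCast (Q ^ ((2 : ℝ) / 3)) 3, ← Real.rpow_mul hQ0.le]
      norm_num
    calc c * Q ^ 2 = (C ^ ((1 : ℝ) / 2) * Q ^ ((2 : ℝ) / 3)) ^ (3 : ℕ) := by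
          rw [mul_pow, h2, h3]
      _ ≤ N ^ 3 := h1
  have hN1 : (1 : ℝ) ≤ N := by
    by_contra hcon
    push_neg at hcon
    have h1 : N ^ 3 ≤ 1 := pow_le_one₀ hN0 hcon.le
    nlinarith [hcub, hc1, hQ2]
  have hQN2 : Q ≤ N ^ 2 := by nlinarith [hcub, hc1, hNQ, hN1, hQ0]
  -- Fourier setup
  set P := A ×ˢ A with hPdef
  set f : F → ℂ := fun x => ∑ p ∈ P, ψ (x * (p.1 * p.2)) with hfdef
  set g : F → ℂ := fun x => ∑ t ∈ T, ψ (-(x * t)) with hgdef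
  set M := ((P ×ˢ P).filter fun z => z.1.1 * z.1.2 = z.2.1 * z.2.2).card with hMdef
  set m : ℝ := (M : ℝ) with hmdef
  have hm0 : (0 : ℝ) ≤ m := Nat.cast_nonneg _
  -- the key vanishing identity
  have hvan : ∑ x : F, (f x * f x * g x) = 0 := by
    refine aux_vanish ψ hψ P T (fun p => p.1 * p.2) (fun t => t) ?_
    intro p hp r hr t ht heq
    rw [hTdef, Finset.mem_compl] at ht
    apply ht
    rw [hSdef, Finset.mem_filter]
    rw [hPdef, Finset.mem_product] at hp hr
    exact ⟨Finset.mem_univ _, p.1, hp.1, p.2, hp.2, r.1, hr.1, r.2, hr.2, heq.symm⟩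
  have hf0 : f 0 = ((A.card * A.card : ℕ) : ℂ) := by
    rw [hfdef]
    simp [AddChar.map_zero_eq_one, hPdef, Finset.card_product]
  have hg0 : g 0 = ((T.card : ℕ) : ℂ) := by
    rw [hgdef]
    simp [AddChar.map_zero_eq_one]
  have hsplit0 : ∑ x ∈ Finset.univ.erase 0, (f x * f x * g x)
      = -(((A.card * A.card : ℕ) : ℂ) * ((A.card * A.card : ℕ) : ℂ) * ((T.card : ℕ) : ℂ)) := by
    have h := Finset.sum_erase_add Finset.univ (fun x => f x * f x * g x) (Finset.mem_univ 0)
    rw [hvan, hf0, hg0] at h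
    linear_combination h
  have hE1 : N ^ 4 * Tc = ‖∑ x ∈ Finset.univ.erase 0, (f x * f x * g x)‖ := by
    rw [hsplit0]
    simp only [norm_neg, norm_mul, Complex.norm_natCast]
    rw [hNdef, hTcdef]
    push_cast
    ring
  -- pointwise bound for f away from 0
  set B : ℝ := Real.sqrt (Q * N ^ 2) with hBdef
  have hBsq : B ^ 2 = Q * N ^ 2 := Real.sq_sqrt (by positivity)
  have hfb : ∀ x ∈ Finset.univ.erase (0 : F), ‖f x‖ ≤ B := by
    intro x hx
    have hx0 : x ≠ 0 := (Finset.mem_erase.1 hx).1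
    have h' : ‖f x‖ ^ 2 ≤ Q * N ^ 2 := aux_point ψ hψ hR A hx0
    rw [← Real.sqrt_sq (norm_nonneg (f x)), hBdef]
    exact Real.sqrt_le_sqrt h'
  -- Parseval for f and g
  have hfsum : ∑ x : F, ‖f x‖ ^ 2 = Q * m :=
    aux_pair_real ψ hψ hR P (fun p => p.1 * p.2)
  have hgsum : ∑ x : F, ‖g x‖ ^ 2 = Q * Tc := by
    have h1 : ∀ x : F, ‖g x‖ = ‖∑ t ∈ T, ψ (x * t)‖ := by
      intro x
      have h2 : (starRingEnd ℂ) (∑ t ∈ T, ψ (x * t)) = g x := by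
        rw [map_sum, hgdef]
        exact Finset.sum_congr rfl fun t _ => aux_conj hR ψ _
      rw [← h2, RCLike.norm_conj]
    simp_rw [h1]
    have h3 : ∑ x : F, ‖∑ t ∈ T, ψ (x * t)‖ ^ 2
        = Q * (((T ×ˢ T).filter fun z : F × F => z.1 = z.2).card : ℝ) :=
      aux_pair_real ψ hψ hR T (fun t => t)
    have hd : ((T ×ˢ T).filter fun z : F × F => z.1 = z.2).card = T.card := aux_diag T
    rw [h3, hd]
  have hf0n : ‖f 0‖ ^ 2 = N ^ 4 := by
    rw [hf0, Complex.norm_natCast, hNdef]; push_cast; ring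
  have hg0n : ‖g 0‖ ^ 2 = Tc ^ 2 := by
    rw [hg0, Complex.norm_natCast, hTcdef]
  have hferase : ∑ x ∈ Finset.univ.erase 0, ‖f x‖ ^ 2 = Q * m - N ^ 4 := by
    have h := Finset.sum_erase_add Finset.univ (fun x => ‖f x‖ ^ 2) (Finset.mem_univ 0)
    rw [hfsum] at h
    rw [← hf0n]
    linarith [h]
  have hgerase : ∑ x ∈ Finset.univ.erase 0, ‖g x‖ ^ 2 = Q * Tc - Tc ^ 2 := by
    have h := Finset.sum_erase_add Finset.univ (fun x => ‖g x‖ ^ 2) (Finset.mem_univ 0)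
    rw [hgsum] at h
    rw [← hg0n]
    linarith [h]
  have hX1 : (0 : ℝ) ≤ Q * m - N ^ 4 := by
    rw [← hferase]
    exact Finset.sum_nonneg fun x _ => sq_nonneg _
  have hX2 : (0 : ℝ) ≤ Q * Tc - Tc ^ 2 := by
    rw [← hgerase]
    exact Finset.sum_nonneg fun x _ => sq_nonneg _
  -- Cauchy–Schwarz
  have hCS : (∑ x ∈ Finset.univ.erase 0, ‖f x‖ * ‖g x‖) ^ 2
      ≤ (Q * m - N ^ 4) * (Q * Tc - Tc ^ 2) := by
    have h := sum_mul_sq_le_sq_mul_sq (Finset.univ.erase (0 : F))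
      (fun x => ‖f x‖) (fun x => ‖g x‖)
    rw [hferase, hgerase] at h
    exact h
  -- main estimate
  have hmain : N ^ 4 * Tc ≤ B * Real.sqrt ((Q * m - N ^ 4) * (Q * Tc - Tc ^ 2)) := by
    rw [hE1]
    calc ‖∑ x ∈ Finset.univ.erase 0, (f x * f x * g x)‖
        ≤ ∑ x ∈ Finset.univ.erase 0, ‖f x * f x * g x‖ := norm_sum_le _ _
      _ = ∑ x ∈ Finset.univ.erase 0, ‖f x‖ * (‖f x‖ * ‖g x‖) := by
          refine Finset.sum_congr rfl fun x _ => ?_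
          rw [norm_mul, norm_mul]; ring
      _ ≤ ∑ x ∈ Finset.univ.erase 0, B * (‖f x‖ * ‖g x‖) := by
          refine Finset.sum_le_sum fun x hx => ?_
          exact mul_le_mul_of_nonneg_right (hfb x hx) (by positivity)
      _ = B * ∑ x ∈ Finset.univ.erase 0, ‖f x‖ * ‖g x‖ := (Finset.mul_sum _ _ _).symm
      _ ≤ B * Real.sqrt ((Q * m - N ^ 4) * (Q * Tc - Tc ^ 2)) := by
          refine mul_le_mul_of_nonneg_left ?_ (Real.sqrt_nonneg _)
          rw [Real.le_sqrt (Finset.sum_nonneg fun x _ =>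
            mul_nonneg (norm_nonneg _) (norm_nonneg _)) (mul_nonneg hX1 hX2)]
          exact hCS
  have hsq : (N ^ 4 * Tc) ^ 2 ≤ (Q * N ^ 2) * ((Q * m - N ^ 4) * (Q * Tc - Tc ^ 2)) := by
    have h1 : (0 : ℝ) ≤ N ^ 4 * Tc := by positivity
    have h2 := mul_self_le_mul_self h1 hmain
    calc (N ^ 4 * Tc) ^ 2 = (N ^ 4 * Tc) * (N ^ 4 * Tc) := by ring
      _ ≤ (B * Real.sqrt ((Q * m - N ^ 4) * (Q * Tc - Tc ^ 2)))
          * (B * Real.sqrt ((Q * m - N ^ 4) * (Q * Tc - Tc ^ 2))) := h2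
      _ = B ^ 2 * Real.sqrt ((Q * m - N ^ 4) * (Q * Tc - Tc ^ 2)) ^ 2 := by ring
      _ = (Q * N ^ 2) * ((Q * m - N ^ 4) * (Q * Tc - Tc ^ 2)) := by
          rw [hBsq, Real.sq_sqrt (mul_nonneg hX1 hX2)]
  -- counting bound
  have hmQ : Q * m - N ^ 4 ≤ Q * N ^ 3 := by
    have hcnt := aux_count A
    have hcR : m ≤ N ^ 3 + N ^ 2 := by
      rw [hmdef, hNdef, hMdef, hPdef]
      exact_mod_cast hcnt
    nlinarith [mul_le_mul_of_nonneg_left hcR hQ0.le,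
      mul_le_mul_of_nonneg_right hQN2 (sq_nonneg N)]
  -- key inequality
  have key1 : Tc * (N ^ 3 + Q ^ 2) ≤ Q ^ 3 := by
    rcases eq_or_lt_of_le hTc0 with hT0 | hTpos
    · rw [← hT0, zero_mul]; positivity
    · have h4 : (N ^ 4 * Tc) ^ 2 ≤ (Q * N ^ 2) * ((Q * N ^ 3) * (Q * Tc - Tc ^ 2)) := by
        refine hsq.trans (mul_le_mul_of_nonneg_left ?_ (by positivity))
        exact mul_le_mul_of_nonneg_right hmQ hX2
      have h5 : N ^ 8 * Tc ≤ Q ^ 2 * N ^ 5 * (Q - Tc) := by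
        have e1 : (N ^ 4 * Tc) ^ 2 = (N ^ 8 * Tc) * Tc := by ring
        have e2 : (Q * N ^ 2) * ((Q * N ^ 3) * (Q * Tc - Tc ^ 2))
            = (Q ^ 2 * N ^ 5 * (Q - Tc)) * Tc := by ring
        rw [e1, e2] at h4
        exact le_of_mul_le_mul_right h4 hTpos
      have hN5 : (0 : ℝ) < N ^ 5 := by positivity
      have h6 : N ^ 3 * Tc ≤ Q ^ 2 * (Q - Tc) := by
        have e3 : N ^ 5 * (N ^ 3 * Tc) = N ^ 8 * Tc := by ring
        have e4 : N ^ 5 * (Q ^ 2 * (Q - Tc)) = Q ^ 2 * N ^ 5 * (Q - Tc) := by ring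
        have h5' : N ^ 5 * (N ^ 3 * Tc) ≤ N ^ 5 * (Q ^ 2 * (Q - Tc)) := by
          rw [e3, e4]; exact h5
        exact le_of_mul_le_mul_left h5' hN5
      nlinarith [h6]
  -- conclusion
  have hc0 : (0 : ℝ) < c + 1 := by linarith
  have hTcQ : Tc * (c + 1) ≤ Q := by
    have h7 : Tc * ((c + 1) * Q ^ 2) ≤ Tc * (N ^ 3 + Q ^ 2) := by
      refine mul_le_mul_of_nonneg_left ?_ hTc0
      have e0 : (c + 1) * Q ^ 2 = c * Q ^ 2 + Q ^ 2 := by ring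
      rw [e0]
      linarith [hcub]
    have h8 : (Tc * (c + 1)) * Q ^ 2 ≤ Q ^ 3 := by
      have e : (Tc * (c + 1)) * Q ^ 2 = Tc * ((c + 1) * Q ^ 2) := by ring
      rw [e]
      exact h7.trans key1
    have hQ2pos : (0 : ℝ) < Q ^ 2 := by positivity
    have h9 : (Tc * (c + 1)) * Q ^ 2 ≤ Q * Q ^ 2 := by
      have e : Q * Q ^ 2 = Q ^ 3 := by ring
      rw [e]
      exact h8
    exact le_of_mul_le_mul_right h9 hQ2pos
  have hScard : (S.card : ℝ) = Q - Tc := by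
    have h := Finset.card_add_card_compl S
    rw [← hTdef] at h
    rw [hQdef, hTcdef, ← h]
    push_cast
    ring
  rw [hScard, ge_iff_le, div_le_iff₀ hc0]
  have h10 : (Q - Tc) * (c + 1) = Q * c + (Q - Tc * (c + 1)) := by ring
  rw [h10]
  linarith [hTcQ]
end

section
/- Let q be a prime power, F_q the finite field with q elements, and ε > 0 a real number. Let d be the smallest positive integer with d ≥ 1/(2ε). If A ⊆ F_q satisfies |A| > q^(1/2 + ε), then every nonzero element of F_q lies in dA². -/
open Finset

lemma addchar_map_sum {ι F : Type*} [AddCommMonoid F] (ψ : AddChar F ℂ) (s : Finset ι)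
    (f : ι → F) : ψ (∑ i ∈ s, f i) = ∏ i ∈ s, ψ (f i) := by
  induction s using Finset.cons_induction with
  | empty => simp
  | cons a s ha ih => rw [Finset.sum_cons, Finset.prod_cons, AddChar.map_add_eq_mul, ih]

set_option maxHeartbeats 3200000 in
lemma dot_key {F : Type*} [Field F] [Fintype F] (d : ℕ) (A : Finset F) (t : F) (ht : t ≠ 0)
    (h : ((Fintype.card F : ℝ)) ^ (d + 1) < ((A.card : ℝ) ^ d) ^ 2) :
    ∃ a a' : Fin d → F, (∀ i, a i ∈ A) ∧ (∀ i, a' i ∈ A) ∧ t = ∑ i, a i * a' i := by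
  classical
  set q := Fintype.card F with hq
  set ψ := AddChar.FiniteField.primitiveChar_to_Complex F with hψdef
  have hψ : ψ.IsPrimitive := AddChar.FiniteField.primitiveChar_to_Complex_isPrimitive F
  have orth : ∀ b : F, ∑ s : F, ψ (s * b) = if b = 0 then (q : ℂ) else 0 := by
    intro b
    rw [AddChar.sum_mulShift b hψ]
    split_ifs <;> simp [hq]
  have orth2 : ∀ b : F, ∑ v : F, ψ (b * v) = if b = 0 then (q : ℂ) else 0 := by
    intro b
    simp_rw [mul_comm b]
    exact orth b
  set E : Finset (Fin d → F) := Fintype.piFinset (fun _ => A) with hE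
  have hEcard : E.card = A.card ^ d := by
    simp [hE, Fintype.card_piFinset]
  set dot : (Fin d → F) → (Fin d → F) → F := fun x y => ∑ i, x i * y i with hdot
  set S : Finset F := Finset.univ.erase 0 with hS
  have hmemS : ∀ s : F, s ∈ S ↔ s ≠ 0 := by
    intro s; rw [hS]; simp
  set N : ℕ := ((E ×ˢ E).filter (fun p => dot p.1 p.2 = t)).card with hN
  rcases Nat.eq_zero_or_pos N with hN0 | hNpos
  · exfalso
    set f : (Fin d → F) → ℂ := fun y => ∑ s ∈ S, ∑ x ∈ E, ψ (s * (dot x y - t)) with hf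
    set R : ℂ := ∑ s ∈ S, ∑ p ∈ E ×ˢ E, ψ (s * (dot p.1 p.2 - t)) with hR
    -- Step 1 : q * N = E.card ^ 2 + R
    have eq2 : (q : ℂ) * N = (E.card : ℂ) ^ 2 + R := by
      have eq1 : ∑ p ∈ E ×ˢ E, ∑ s : F, ψ (s * (dot p.1 p.2 - t)) = (q : ℂ) * N := by
        have key : ∀ p ∈ E ×ˢ E, ∑ s : F, ψ (s * (dot p.1 p.2 - t))
            = if dot p.1 p.2 = t then (q : ℂ) else 0 := by
          intro p _
          rw [orth]
          simp [sub_eq_zero]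
        rw [Finset.sum_congr rfl key, ← Finset.sum_filter, Finset.sum_const, hN,
          nsmul_eq_mul, mul_comm]
      rw [← eq1, Finset.sum_comm, ← Finset.add_sum_erase _ _ (Finset.mem_univ (0 : F)),
        ← hS]
      congr 1
      simp [Finset.card_product, sq]
    -- Step 2 : R = ∑ y in E, f y
    have eqR : R = ∑ y ∈ E, f y := by
      rw [hR]
      calc ∑ s ∈ S, ∑ p ∈ E ×ˢ E, ψ (s * (dot p.1 p.2 - t))
          = ∑ s ∈ S, ∑ y ∈ E, ∑ x ∈ E, ψ (s * (dot x y - t)) := by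
            refine Finset.sum_congr rfl fun s _ => ?_
            rw [Finset.sum_product]
            exact Finset.sum_comm
        _ = ∑ y ∈ E, f y := Finset.sum_comm
    -- Step 3 : Cauchy-Schwarz
    have hCS : ‖R‖ ^ 2 ≤ (E.card : ℝ) * ∑ y ∈ E, ‖f y‖ ^ 2 := by
      have h1 : ‖R‖ ≤ ∑ y ∈ E, ‖f y‖ := by
        rw [eqR]; exact norm_sum_le _ _
      have h2 : (∑ y ∈ E, ‖f y‖) ^ 2 ≤ (E.card : ℝ) * ∑ y ∈ E, ‖f y‖ ^ 2 := by
        exact sq_sum_le_card_mul_sum_sq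
      exact le_trans (pow_le_pow_left₀ (norm_nonneg R) h1 2) h2
    have hsub : ∑ y ∈ E, ‖f y‖ ^ 2 ≤ ∑ y : Fin d → F, ‖f y‖ ^ 2 := by
      refine Finset.sum_le_sum_of_subset_of_nonneg (Finset.subset_univ E) ?_
      intro y _ _
      positivity
    -- the quadruple product set
    set Q : Finset ((F × (Fin d → F)) × (F × (Fin d → F))) := (S ×ˢ E) ×ˢ (S ×ˢ E) with hQ
    -- conjugate of f
    have conj_f : ∀ y, (starRingEnd ℂ) (f y)
        = ∑ s ∈ S, ∑ x ∈ E, ψ (-(s * (dot x y - t))) := by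
      intro y
      rw [hf]
      rw [map_sum]
      refine Finset.sum_congr rfl fun s _ => ?_
      rw [map_sum]
      refine Finset.sum_congr rfl fun x _ => ?_
      exact (AddChar.map_neg_eq_conj ψ _).symm
    have big1 : ∀ y, f y * (starRingEnd ℂ) (f y)
        = ∑ p ∈ Q, ψ (p.1.1 * (dot p.1.2 y - t) - p.2.1 * (dot p.2.2 y - t)) := by
      intro y
      have e1 : f y * (starRingEnd ℂ) (f y) = ∑ s ∈ S, ∑ s' ∈ S, ∑ x ∈ E, ∑ x' ∈ E,
          ψ (s * (dot x y - t) - s' * (dot x' y - t)) := by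
        rw [hf, conj_f y, Finset.sum_mul_sum]
        refine Finset.sum_congr rfl fun s _ => Finset.sum_congr rfl fun s' _ => ?_
        rw [Finset.sum_mul_sum]
        refine Finset.sum_congr rfl fun x _ => Finset.sum_congr rfl fun x' _ => ?_
        rw [← AddChar.map_add_eq_mul, ← sub_eq_add_neg]
      have e2 : ∑ p ∈ Q, ψ (p.1.1 * (dot p.1.2 y - t) - p.2.1 * (dot p.2.2 y - t))
          = ∑ s ∈ S, ∑ x ∈ E, ∑ s' ∈ S, ∑ x' ∈ E,
            ψ (s * (dot x y - t) - s' * (dot x' y - t)) := by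
        rw [hQ]
        simp only [Finset.sum_product]
      rw [e1, e2]
      exact Finset.sum_congr rfl fun s _ => Finset.sum_comm
    -- sum over y
    have sumy : ∑ y : Fin d → F, f y * (starRingEnd ℂ) (f y)
        = ∑ p ∈ Q, ψ ((p.2.1 - p.1.1) * t) *
            (if (fun i => p.1.1 * p.1.2 i) = (fun i => p.2.1 * p.2.2 i)
              then ((q : ℂ)) ^ d else 0) := by
      simp_rw [big1]
      rw [Finset.sum_comm]
      refine Finset.sum_congr rfl fun p hp => ?_
      obtain ⟨⟨s, x⟩, s', x'⟩ := p
      simp only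
      have harg : ∀ y : Fin d → F, s * (dot x y - t) - s' * (dot x' y - t)
          = (s' - s) * t + ∑ i, (s * x i - s' * x' i) * y i := by
        intro y
        have e1 : ∑ i, (s * x i - s' * x' i) * y i = s * dot x y - s' * dot x' y := by
          rw [hdot]
          simp only
          rw [Finset.mul_sum, Finset.mul_sum, ← Finset.sum_sub_distrib]
          exact Finset.sum_congr rfl fun i _ => by ring
        rw [e1]
        ring
      calc ∑ y : Fin d → F, ψ (s * (dot x y - t) - s' * (dot x' y - t))
          = ∑ y : Fin d → F, ψ ((s' - s) * t) * ψ (∑ i, (s * x i - s' * x' i) * y i) := by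
            refine Finset.sum_congr rfl fun y _ => ?_
            rw [harg y, AddChar.map_add_eq_mul]
        _ = ψ ((s' - s) * t) * ∑ y : Fin d → F, ∏ i, ψ ((s * x i - s' * x' i) * y i) := by
            rw [← Finset.mul_sum]
            congr 1
            exact Finset.sum_congr rfl fun y _ => by rw [addchar_map_sum]
        _ = ψ ((s' - s) * t) * ∏ i, ∑ v : F, ψ ((s * x i - s' * x' i) * v) := by
            rw [Finset.prod_univ_sum, Fintype.piFinset_univ]
        _ = ψ ((s' - s) * t) * (if (fun i => s * x i) = (fun i => s' * x' i)
              then ((q : ℂ)) ^ d else 0) := by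
            congr 1
            by_cases hc : (fun i => s * x i) = (fun i => s' * x' i)
            · rw [if_pos hc]
              have hz : ∀ i, s * x i - s' * x' i = 0 :=
                fun i => sub_eq_zero.mpr (congrFun hc i)
              calc ∏ i, ∑ v : F, ψ ((s * x i - s' * x' i) * v)
                  = ∏ _i : Fin d, (q : ℂ) := by
                    refine Finset.prod_congr rfl fun i _ => ?_
                    rw [orth2, if_pos (hz i)]
                _ = (q : ℂ) ^ d := by simp
            · rw [if_neg hc]
              obtain ⟨i, hi⟩ : ∃ i, s * x i ≠ s' * x' i := by
                by_contra hall
                push_neg at hall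
                exact hc (funext hall)
              refine Finset.prod_eq_zero (Finset.mem_univ i) ?_
              rw [orth2, if_neg (sub_ne_zero.mpr hi)]
    set Kc : F → ℕ := fun l => (E.filter (fun x => (fun i => l * x i) ∈ E)).card with hKc
    -- fold the ite into a filter
    have big3 : ∑ y : Fin d → F, f y * (starRingEnd ℂ) (f y)
        = (q : ℂ) ^ d * ∑ p ∈ Q.filter
            (fun p => (fun i => p.1.1 * p.1.2 i) = (fun i => p.2.1 * p.2.2 i)),
            ψ ((p.2.1 - p.1.1) * t) := by
      rw [sumy, Finset.sum_filter, Finset.mul_sum]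
      refine Finset.sum_congr rfl fun p _ => ?_
      split_ifs <;> ring
    -- the reindexing bijection
    have bij : ∑ p ∈ Q.filter
          (fun p => (fun i => p.1.1 * p.1.2 i) = (fun i => p.2.1 * p.2.2 i)),
          ψ ((p.2.1 - p.1.1) * t)
        = ∑ p ∈ Q.filter (fun p => p.2.2 = fun i => p.1.1 * p.1.2 i),
          ψ ((p.2.1 - p.1.1 * p.2.1) * t) := by
      refine Finset.sum_bij' (fun p _ => ((p.1.1 * p.2.1⁻¹, p.1.2), p.2))
        (fun p _ => ((p.1.1 * p.2.1, p.1.2), p.2)) ?_ ?_ ?_ ?_ ?_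
      · intro p hp
        simp only [Finset.mem_filter, hQ, Finset.mem_product, hmemS] at hp ⊢
        obtain ⟨⟨⟨hs, hx⟩, hs', hx'⟩, hcond⟩ := hp
        refine ⟨⟨⟨mul_ne_zero hs (inv_ne_zero hs'), hx⟩, hs', hx'⟩, ?_⟩
        funext i
        apply mul_left_cancel₀ hs'
        rw [← congrFun hcond i]
        field_simp
      · intro p hp
        simp only [Finset.mem_filter, hQ, Finset.mem_product, hmemS] at hp ⊢
        obtain ⟨⟨⟨hs, hx⟩, hs', hx'⟩, hcond⟩ := hp
        refine ⟨⟨⟨mul_ne_zero hs hs', hx⟩, hs', hx'⟩, ?_⟩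
        funext i
        rw [congrFun hcond i]
        ring
      · intro p hp
        simp only [Finset.mem_filter, hQ, Finset.mem_product, hmemS] at hp
        obtain ⟨⟨⟨hs, hx⟩, hs', hx'⟩, hcond⟩ := hp
        have : p.1.1 * p.2.1⁻¹ * p.2.1 = p.1.1 := by field_simp
        simp [this]
      · intro p hp
        simp only [Finset.mem_filter, hQ, Finset.mem_product, hmemS] at hp
        obtain ⟨⟨⟨hs, hx⟩, hs', hx'⟩, hcond⟩ := hp
        have : p.1.1 * p.2.1 * p.2.1⁻¹ = p.1.1 := by field_simp
        simp [this]
      · intro p hp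
        simp only [Finset.mem_filter, hQ, Finset.mem_product, hmemS] at hp
        obtain ⟨⟨⟨hs, hx⟩, hs', hx'⟩, hcond⟩ := hp
        have : p.1.1 * p.2.1⁻¹ * p.2.1 = p.1.1 := by field_simp
        rw [this]
    -- evaluate the remaining sum
    have cS : ∀ u : F, ∑ v ∈ S, ψ (v * u) = (if u = 0 then (q : ℂ) else 0) - 1 := by
      intro u
      have h0 := orth u
      rw [← Finset.add_sum_erase _ _ (Finset.mem_univ (0 : F)), ← hS, zero_mul,
        AddChar.map_zero_eq_one] at h0
      exact eq_sub_of_add_eq' h0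
    have h1S : (1 : F) ∈ S := by rw [hmemS]; exact one_ne_zero
    have eval : ∑ p ∈ Q.filter (fun p => p.2.2 = fun i => p.1.1 * p.1.2 i),
          ψ ((p.2.1 - p.1.1 * p.2.1) * t)
        = (E.card : ℂ) * ((q : ℂ) - 1) - ∑ l ∈ S.erase 1, (Kc l : ℂ) := by
      calc ∑ p ∈ Q.filter (fun p => p.2.2 = fun i => p.1.1 * p.1.2 i),
            ψ ((p.2.1 - p.1.1 * p.2.1) * t)
          = ∑ p ∈ Q, if p.2.2 = (fun i => p.1.1 * p.1.2 i)
              then ψ ((p.2.1 - p.1.1 * p.2.1) * t) else 0 := Finset.sum_filter _ _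
        _ = ∑ a ∈ S ×ˢ E, ∑ s' ∈ S, ∑ x' ∈ E, if x' = (fun i => a.1 * a.2 i)
              then ψ ((s' - a.1 * s') * t) else 0 := by
            rw [hQ]
            simp only [Finset.sum_product]
        _ = ∑ a ∈ S ×ˢ E, ∑ s' ∈ S, (if (fun i => a.1 * a.2 i) ∈ E
              then ψ ((s' - a.1 * s') * t) else 0) := by
            refine Finset.sum_congr rfl fun a _ => Finset.sum_congr rfl fun s' _ => ?_
            exact Finset.sum_ite_eq' E _ _
        _ = ∑ a ∈ S ×ˢ E, (if (fun i => a.1 * a.2 i) ∈ E then (1:ℂ) else 0) *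
              ∑ s' ∈ S, ψ (s' * ((1 - a.1) * t)) := by
            refine Finset.sum_congr rfl fun a _ => ?_
            split_ifs with hc
            · rw [one_mul]
              refine Finset.sum_congr rfl fun s' _ => ?_
              congr 1
              ring
            · simp
        _ = ∑ a ∈ S ×ˢ E, (if (fun i => a.1 * a.2 i) ∈ E then (1:ℂ) else 0) *
              ((if (1 - a.1) * t = 0 then (q : ℂ) else 0) - 1) := by
            refine Finset.sum_congr rfl fun a _ => by rw [cS]
        _ = ∑ l ∈ S, (Kc l : ℂ) * ((if (1 - l) * t = 0 then (q : ℂ) else 0) - 1) := by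
            simp only [Finset.sum_product]
            refine Finset.sum_congr rfl fun l _ => ?_
            have hb : ∑ x ∈ E, (if (fun i => l * x i) ∈ E then (1:ℂ) else 0)
                = (Kc l : ℂ) := by
              rw [hKc]
              exact_mod_cast Finset.sum_boole _ _
            rw [← hb, Finset.sum_mul]
        _ = (E.card : ℂ) * ((q : ℂ) - 1) + ∑ l ∈ S.erase 1, (Kc l : ℂ) * (-1) := by
            rw [← Finset.add_sum_erase _ _ h1S]
            congr 1
            · have h11 : (1 - (1 : F)) * t = 0 := by ring
              rw [if_pos h11]
              have hK1 : Kc 1 = E.card := by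
                rw [hKc]
                refine congrArg _ (Finset.filter_true_of_mem fun x hx => ?_)
                simpa using hx
              rw [hK1]
            · refine Finset.sum_congr rfl fun l hl => ?_
              have hl1 : l ≠ 1 := (Finset.mem_erase.mp hl).1
              have : (1 - l) * t ≠ 0 := mul_ne_zero (sub_ne_zero.mpr (Ne.symm hl1)) ht
              rw [if_neg this]
              norm_num
        _ = (E.card : ℂ) * ((q : ℂ) - 1) - ∑ l ∈ S.erase 1, (Kc l : ℂ) := by
            simp [mul_neg_one, Finset.sum_neg_distrib, sub_eq_add_neg]
    have grand : ∑ y : Fin d → F, f y * (starRingEnd ℂ) (f y)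
        = (q : ℂ) ^ d * ((E.card : ℂ) * ((q : ℂ) - 1) - ∑ l ∈ S.erase 1, (Kc l : ℂ)) := by
      rw [big3, bij, eval]
    -- extract the real identity
    have hrealsum : ∑ y : Fin d → F, ‖f y‖ ^ 2
        = (q : ℝ) ^ d * ((E.card : ℝ) * ((q : ℝ) - 1) - ∑ l ∈ S.erase 1, (Kc l : ℝ)) := by
      apply Complex.ofReal_injective
      have lhs : ((∑ y : Fin d → F, ‖f y‖ ^ 2 : ℝ) : ℂ)
          = ∑ y : Fin d → F, f y * (starRingEnd ℂ) (f y) := by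
        push_cast
        refine Finset.sum_congr rfl fun y _ => ?_
        rw [Complex.mul_conj, Complex.normSq_eq_norm_sq]
        push_cast
        ring
      rw [lhs, grand]
      push_cast
      ring
    -- upper bound
    have hq1 : (1 : ℝ) ≤ (q : ℝ) := by
      have : 0 < q := Fintype.card_pos
      exact_mod_cast this
    have hEnn : (0 : ℝ) ≤ (E.card : ℝ) := Nat.cast_nonneg _
    have hKnn : (0 : ℝ) ≤ ∑ l ∈ S.erase 1, (Kc l : ℝ) :=
      Finset.sum_nonneg fun l _ => Nat.cast_nonneg _
    have hMbound : ∑ y : Fin d → F, ‖f y‖ ^ 2 ≤ (q : ℝ) ^ (d + 1) * E.card := by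
      rw [hrealsum, pow_succ]
      have h0 : (0 : ℝ) ≤ (q : ℝ) ^ d := by positivity
      nlinarith [mul_nonneg h0 hEnn, mul_nonneg h0 hKnn]
    -- final contradiction
    have hRval : R = -((E.card : ℂ) ^ 2) := by
      have h' := eq2
      rw [hN0] at h'
      simp only [Nat.cast_zero, mul_zero] at h'
      linear_combination -h'
    have hRnorm : ‖R‖ = (E.card : ℝ) ^ 2 := by
      rw [hRval, norm_neg, norm_pow]
      norm_num
    have c1 : ((E.card : ℝ) ^ 2) ^ 2 ≤ (E.card : ℝ) * ((q : ℝ) ^ (d + 1) * E.card) := by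
      rw [← hRnorm]
      calc ‖R‖ ^ 2 ≤ (E.card : ℝ) * ∑ y ∈ E, ‖f y‖ ^ 2 := hCS
        _ ≤ (E.card : ℝ) * ((q : ℝ) ^ (d + 1) * E.card) := by
            exact mul_le_mul_of_nonneg_left (le_trans hsub hMbound) hEnn
    have hh : (q : ℝ) ^ (d + 1) < (E.card : ℝ) ^ 2 := by
      rw [hEcard]
      push_cast
      exact h
    have hq1d : (1 : ℝ) ≤ (q : ℝ) ^ (d + 1) := by
      calc (1 : ℝ) = 1 ^ (d + 1) := by norm_num
        _ ≤ (q : ℝ) ^ (d + 1) := pow_le_pow_left₀ zero_le_one hq1 _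
    have hE2 : (0 : ℝ) < (E.card : ℝ) ^ 2 := lt_of_lt_of_le zero_lt_one
      (le_of_lt (lt_of_le_of_lt hq1d hh))
    have step : (q : ℝ) ^ (d + 1) * (E.card : ℝ) ^ 2
        < (E.card : ℝ) ^ 2 * (E.card : ℝ) ^ 2 := mul_lt_mul_of_pos_right hh hE2
    nlinarith [c1, step]
  · obtain ⟨p, hp⟩ := Finset.card_pos.mp hNpos
    rw [Finset.mem_filter, Finset.mem_product] at hp
    refine ⟨p.1, p.2, ?_, ?_, ?_⟩
    · exact fun i => (Fintype.mem_piFinset.mp hp.1.1) i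
    · exact fun i => (Fintype.mem_piFinset.mp hp.1.2) i
    · exact hp.2.symm

/-- If `|A| > q^(1/2+ε)` and `d` is the smallest positive integer with `d ≥ 1/(2ε)`,
then every nonzero element of `F_q` lies in `dA²`. -/
theorem stmt_4 {F : Type*} [Field F] [Fintype F] (ε : ℝ) (hε : 0 < ε)
    (d : ℕ) (hd : d = max 1 ⌈1 / (2 * ε)⌉₊)
    (A : Finset F)
    (hA : (A.card : ℝ) > (Fintype.card F : ℝ) ^ ((1 : ℝ) / 2 + ε)) :
    ∀ t : F, t ≠ 0 →
      ∃ a a' : Fin d → F, (∀ i, a i ∈ A) ∧ (∀ i, a' i ∈ A) ∧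
        t = ∑ i, a i * a' i := by
  intro t ht
  have hq1 : (1 : ℝ) ≤ (Fintype.card F : ℝ) := by
    exact_mod_cast Fintype.card_pos
  have hd1 : 1 ≤ d := by omega
  have hdε : 1 ≤ 2 * ε * d := by
    have h1 : (⌈1 / (2 * ε)⌉₊ : ℝ) ≤ d := by
      exact_mod_cast Nat.cast_le.mpr (by omega : ⌈1 / (2 * ε)⌉₊ ≤ d)
    have h2 : 1 / (2 * ε) ≤ (d : ℝ) := le_trans (Nat.le_ceil _) h1
    rw [div_le_iff₀ (by positivity)] at h2
    nlinarith
  apply dot_key d A t ht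
  have hA0 : (0:ℝ) ≤ (Fintype.card F : ℝ) ^ ((1 : ℝ) / 2 + ε) := by positivity
  have key : ((Fintype.card F : ℝ) ^ ((1 : ℝ) / 2 + ε)) ^ (2 * d) ≥
      (Fintype.card F : ℝ) ^ (d + 1) := by
    rw [← Real.rpow_natCast ((Fintype.card F : ℝ) ^ ((1 : ℝ) / 2 + ε)) (2 * d),
      ← Real.rpow_mul (by linarith) , ← Real.rpow_natCast (Fintype.card F : ℝ) (d + 1)]
    apply Real.rpow_le_rpow_of_exponent_le hq1
    push_cast
    nlinarith
  calc (Fintype.card F : ℝ) ^ (d + 1) ≤ ((Fintype.card F : ℝ) ^ ((1:ℝ)/2 + ε)) ^ (2*d) := key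
    _ < (A.card : ℝ) ^ (2 * d) := by
        apply pow_lt_pow_left₀ hA hA0 (by omega)
    _ = ((A.card : ℝ) ^ d) ^ 2 := by rw [← pow_mul, mul_comm]
end

section
/- Let q be a prime power, F_q the finite field with q elements, d a positive integer, and let C_geom > 0, C_size > 0 and 0 ≤ α ≤ d be real numbers. Let E ⊆ F_q^d be such that |E ∩ l_y| ≤ C_geom · q^(α/d) for every y ∈ F_q^d with y ≠ 0, where l_y = {t·y : t ∈ F_q}. If |E| ≥ C_size · q^(d/2 + α/(2d)), then |{x·y : x, y ∈ E}| ≥ q · C_size² / (C_size² + C_geom). -/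
set_option linter.unusedSectionVars false

open Finset AddChar Complex
open scoped Classical

section aux
variable {F : Type*} [Field F] [Fintype F] {d : ℕ}

private def dotp (x y : Fin d → F) : F := ∑ i, x i * y i

private lemma dotp_smul_right (x : Fin d → F) (s : F) (y : Fin d → F) :
    dotp x (s • y) = s * dotp x y := by
  unfold dotp
  rw [Finset.mul_sum]
  refine Finset.sum_congr rfl fun i _ => ?_
  simp [Pi.smul_apply, smul_eq_mul]; ring

private lemma dotp_sub_left (x x' z : Fin d → F) :
    dotp (x - x') z = dotp x z - dotp x' z := by
  unfold dotp
  rw [← Finset.sum_sub_distrib]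
  refine Finset.sum_congr rfl fun i _ => ?_
  simp [sub_mul]

private lemma dotp_zero_right (x : Fin d → F) : dotp x 0 = 0 := by
  simp [dotp]

private lemma psi_map_sum {ι : Type*} (ψ : AddChar F ℂ) (s : Finset ι) (f : ι → F) :
    ψ (∑ i ∈ s, f i) = ∏ i ∈ s, ψ (f i) := by
  induction s using Finset.cons_induction with
  | empty => simp
  | cons a s ha ih => rw [Finset.sum_cons, Finset.prod_cons, map_add_eq_mul, ih]

private lemma sum_psi_vec (ψ : AddChar F ℂ) (hψ : ψ.IsPrimitive) (v : Fin d → F) :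
    ∑ z : Fin d → F, ψ (dotp v z) = if v = 0 then ((Fintype.card F ^ d : ℕ) : ℂ) else 0 := by
  have hfac : ∀ z : Fin d → F, ψ (dotp v z) = ∏ i, ψ (v i * z i) := fun z =>
    psi_map_sum ψ univ (fun i => v i * z i)
  simp_rw [hfac]
  have hswap : ∑ z : Fin d → F, ∏ i, ψ (v i * z i) = ∏ i, ∑ w : F, ψ (v i * w) := by
    rw [← Fintype.piFinset_univ]
    exact Finset.sum_prod_piFinset univ (fun i w => ψ (v i * w))
  rw [hswap]
  have hone : ∀ i : Fin d, ∑ w : F, ψ (v i * w) = if v i = 0 then (Fintype.card F : ℂ) else 0 := by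
    intro i
    simp_rw [mul_comm (v i)]
    simpa using AddChar.sum_mulShift (v i) hψ
  simp_rw [hone]
  by_cases hv : v = 0
  · subst hv; simp
  · obtain ⟨i, hi⟩ := Function.ne_iff.mp hv
    rw [if_neg hv]
    exact Finset.prod_eq_zero (mem_univ i) (by rw [if_neg (by simpa using hi)])

/-- `T` function. -/
private noncomputable def Tf (ψ : AddChar F ℂ) (E : Finset (Fin d → F)) (z : Fin d → F) : ℂ :=
  ∑ x ∈ E, ψ (dotp x z)

private lemma Tf_zero (ψ : AddChar F ℂ) (E : Finset (Fin d → F)) :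
    Tf ψ E 0 = (E.card : ℂ) := by
  unfold Tf
  simp [dotp_zero_right]

private lemma parseval (ψ : AddChar F ℂ) (hψ : ψ.IsPrimitive) (E : Finset (Fin d → F)) :
    ∑ z : Fin d → F, Complex.normSq (Tf ψ E z)
      = ((Fintype.card F ^ d : ℕ) : ℝ) * E.card := by
  have key : ∑ z : Fin d → F, (Complex.normSq (Tf ψ E z) : ℂ)
      = ((Fintype.card F ^ d : ℕ) : ℂ) * E.card := by
    have expand : ∀ z : Fin d → F, (Complex.normSq (Tf ψ E z) : ℂ)
        = ∑ x ∈ E, ∑ x' ∈ E, ψ (dotp (x - x') z) := by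
      intro z
      rw [← Complex.mul_conj]
      unfold Tf
      rw [map_sum, Finset.sum_mul_sum]
      refine Finset.sum_congr rfl fun x hx => Finset.sum_congr rfl fun x' hx' => ?_
      rw [← AddChar.map_neg_eq_conj, ← map_add_eq_mul, dotp_sub_left]
      ring_nf
    simp_rw [expand]
    rw [Finset.sum_comm]
    have h1 : ∀ x ∈ E, ∑ x' ∈ E, ∑ z : Fin d → F, ψ (dotp (x - x') z)
        = ((Fintype.card F ^ d : ℕ) : ℂ) := by
      intro x hx
      have h2 : ∀ x' ∈ E, ∑ z : Fin d → F, ψ (dotp (x - x') z)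
          = if x = x' then ((Fintype.card F ^ d : ℕ) : ℂ) else 0 := by
        intro x' _
        rw [sum_psi_vec ψ hψ (x - x')]
        simp only [sub_eq_zero]
      rw [Finset.sum_congr rfl h2, Finset.sum_ite_eq, if_pos hx]
    have : ∀ x ∈ E, ∑ z : Fin d → F, ∑ x' ∈ E, ψ (dotp (x - x') z)
        = ((Fintype.card F ^ d : ℕ) : ℂ) := by
      intro x hx
      rw [Finset.sum_comm]
      exact h1 x hx
    rw [Finset.sum_congr rfl this, Finset.sum_const, nsmul_eq_mul, mul_comm]
  have := key
  rw [← Complex.ofReal_sum] at this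
  have h3 : ((Fintype.card F ^ d : ℕ) : ℂ) * (E.card : ℂ)
      = ((((Fintype.card F ^ d : ℕ) : ℝ) * E.card : ℝ) : ℂ) := by push_cast; ring
  rw [h3] at this
  exact_mod_cast this

private lemma energy (ψ : AddChar F ℂ) (hψ : ψ.IsPrimitive)
    (X : Finset ((Fin d → F) × (Fin d → F))) :
    ∑ s : F, Complex.normSq (∑ p ∈ X, ψ (s * dotp p.1 p.2))
      = (Fintype.card F : ℝ) * ∑ t ∈ X.image (fun p => dotp p.1 p.2),
          ((#{p ∈ X | dotp p.1 p.2 = t}) : ℝ) ^ 2 := by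
  set g : (Fin d → F) × (Fin d → F) → F := fun p => dotp p.1 p.2 with hg
  set ν : F → ℕ := fun t => #{p ∈ X | g p = t} with hν
  have hS : ∀ s : F, (∑ p ∈ X, ψ (s * g p)) = ∑ t ∈ X.image g, (ν t : ℂ) * ψ (s * t) := by
    intro s
    rw [Finset.sum_comp (fun t => ψ (s * t)) g]
    simp [nsmul_eq_mul, hν]
  have key : ∑ s : F, (Complex.normSq (∑ p ∈ X, ψ (s * g p)) : ℂ)
      = (Fintype.card F : ℂ) * ∑ t ∈ X.image g, (ν t : ℂ) ^ 2 := by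
    have expand : ∀ s : F, (Complex.normSq (∑ p ∈ X, ψ (s * g p)) : ℂ)
        = ∑ t ∈ X.image g, ∑ t' ∈ X.image g, (ν t : ℂ) * (ν t') * ψ (s * (t - t')) := by
      intro s
      rw [← Complex.mul_conj, hS, map_sum, Finset.sum_mul_sum]
      refine Finset.sum_congr rfl fun t ht => Finset.sum_congr rfl fun t' ht' => ?_
      have h1 : (starRingEnd ℂ) ((ν t' : ℂ) * ψ (s * t'))
          = (ν t' : ℂ) * ψ (-(s * t')) := by
        simp [← AddChar.map_neg_eq_conj]
      rw [h1, show (ν t : ℂ) * ψ (s * t) * ((ν t' : ℂ) * ψ (-(s * t')))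
          = (ν t : ℂ) * (ν t' : ℂ) * (ψ (s * t) * ψ (-(s * t'))) from by ring,
        ← map_add_eq_mul, show s * t + -(s * t') = s * (t - t') from by ring]
    simp_rw [expand]
    rw [Finset.sum_comm]
    have inner : ∀ t ∈ X.image g,
        ∑ s : F, ∑ t' ∈ X.image g, (ν t : ℂ) * (ν t') * ψ (s * (t - t'))
          = (Fintype.card F : ℂ) * (ν t : ℂ) ^ 2 := by
      intro t ht
      rw [Finset.sum_comm]
      have h2 : ∀ t' ∈ X.image g, ∑ s : F, (ν t : ℂ) * (ν t') * ψ (s * (t - t'))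
          = if t = t' then (Fintype.card F : ℂ) * (ν t : ℂ) * (ν t') else 0 := by
        intro t' _
        rw [← Finset.mul_sum, AddChar.sum_mulShift _ hψ]
        simp only [sub_eq_zero]
        by_cases h : t = t'
        · rw [if_pos h, if_pos h]; push_cast; ring
        · rw [if_neg h, if_neg h]; simp
      rw [Finset.sum_congr rfl h2, Finset.sum_ite_eq, if_pos ht]
      ring
    rw [Finset.sum_congr rfl inner, ← Finset.mul_sum]
  have key2 := key
  rw [← Complex.ofReal_sum] at key2
  have h3 : (Fintype.card F : ℂ) * ∑ t ∈ X.image g, (ν t : ℂ) ^ 2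
      = ((((Fintype.card F : ℝ)) * ∑ t ∈ X.image g, ((ν t : ℝ)) ^ 2 : ℝ) : ℂ) := by
    push_cast; ring
  rw [h3] at key2
  exact_mod_cast key2

private lemma S_eq_sum_T (ψ : AddChar F ℂ) (E E₀ : Finset (Fin d → F)) (s : F) :
    (∑ p ∈ E ×ˢ E₀, ψ (s * dotp p.1 p.2)) = ∑ y ∈ E₀, Tf ψ E (s • y) := by
  rw [Finset.sum_product]
  rw [Finset.sum_comm]
  refine Finset.sum_congr rfl fun y hy => Finset.sum_congr rfl fun x hx => ?_
  rw [← dotp_smul_right]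

private lemma cs_normSq (E₀ : Finset (Fin d → F)) (f : (Fin d → F) → ℂ) :
    Complex.normSq (∑ y ∈ E₀, f y) ≤ (E₀.card : ℝ) * ∑ y ∈ E₀, Complex.normSq (f y) := by
  have h1 : ‖∑ y ∈ E₀, f y‖ ≤ ∑ y ∈ E₀, ‖f y‖ := norm_sum_le _ _
  have h2 : (∑ y ∈ E₀, ‖f y‖) ^ 2 ≤ (E₀.card : ℝ) * ∑ y ∈ E₀, ‖f y‖ ^ 2 :=
    sq_sum_le_card_mul_sum_sq
  have h3 : Complex.normSq (∑ y ∈ E₀, f y) = ‖∑ y ∈ E₀, f y‖ ^ 2 := by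
    rw [← Complex.sq_norm]
  have h4 : ∀ y : Fin d → F, Complex.normSq (f y) = ‖f y‖ ^ 2 := fun y => by
    rw [← Complex.sq_norm]
  rw [h3]
  simp_rw [h4]
  calc ‖∑ y ∈ E₀, f y‖ ^ 2 ≤ (∑ y ∈ E₀, ‖f y‖) ^ 2 := by
        apply pow_le_pow_left₀ (norm_nonneg _) h1
    _ ≤ (E₀.card : ℝ) * ∑ y ∈ E₀, ‖f y‖ ^ 2 := h2

private lemma fourier_bound (ψ : AddChar F ℂ) (hψ : ψ.IsPrimitive)
    (E E₀ : Finset (Fin d → F)) (h0 : (0 : Fin d → F) ∉ E₀) (μ : ℝ) (hμ0 : 0 ≤ μ)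
    (hcnt : ∀ z : Fin d → F, z ≠ 0 →
      ((#{p ∈ (Finset.univ.erase (0 : F)) ×ˢ E₀ | p.1 • p.2 = z}) : ℝ) ≤ μ) :
    (Fintype.card F : ℝ) * ∑ t ∈ (E ×ˢ E₀).image (fun p => dotp p.1 p.2),
        ((#{p ∈ E ×ˢ E₀ | dotp p.1 p.2 = t}) : ℝ) ^ 2
      ≤ ((E.card : ℝ) * E₀.card) ^ 2
        + (E.card : ℝ) * E₀.card * μ * (((Fintype.card F ^ d : ℕ) : ℝ) - E.card) := by
  rw [← energy ψ hψ (E ×ˢ E₀)]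
  set S : F → ℂ := fun s => ∑ p ∈ E ×ˢ E₀, ψ (s * dotp p.1 p.2) with hSdef
  have hsplit : ∑ s : F, Complex.normSq (S s)
      = Complex.normSq (S 0) + ∑ s ∈ univ.erase (0 : F), Complex.normSq (S s) :=
    (Finset.add_sum_erase univ _ (mem_univ 0)).symm
  have hS0 : S 0 = ((E.card * E₀.card : ℕ) : ℂ) := by
    rw [hSdef]
    simp only [zero_mul, AddChar.map_zero_eq_one]
    rw [Finset.sum_const, Finset.card_product, nsmul_eq_mul, mul_one]
  have hS0sq : Complex.normSq (S 0) = ((E.card : ℝ) * E₀.card) ^ 2 := by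
    rw [hS0, Complex.normSq_natCast]
    push_cast
    ring
  -- Cauchy-Schwarz for each nonzero s
  have hcs : ∀ s : F, Complex.normSq (S s)
      ≤ (E₀.card : ℝ) * ∑ y ∈ E₀, Complex.normSq (Tf ψ E (s • y)) := by
    intro s
    have h := S_eq_sum_T ψ E E₀ s
    have h2 : Complex.normSq (S s) = Complex.normSq (∑ y ∈ E₀, Tf ψ E (s • y)) :=
      congrArg Complex.normSq h
    rw [h2]
    exact cs_normSq E₀ _
  have hb2 : ∑ s ∈ univ.erase (0 : F), Complex.normSq (S s)
      ≤ (E₀.card : ℝ) * ∑ s ∈ univ.erase (0 : F), ∑ y ∈ E₀,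
          Complex.normSq (Tf ψ E (s • y)) := by
    rw [Finset.mul_sum]
    exact Finset.sum_le_sum fun s _ => hcs s
  -- rewrite double sum via fibers of (s, y) ↦ s • y
  have hb3 : ∑ s ∈ univ.erase (0 : F), ∑ y ∈ E₀, Complex.normSq (Tf ψ E (s • y))
      ≤ μ * ∑ z ∈ univ.erase (0 : Fin d → F), Complex.normSq (Tf ψ E z) := by
    have hprod : ∑ s ∈ univ.erase (0 : F), ∑ y ∈ E₀, Complex.normSq (Tf ψ E (s • y))
        = ∑ p ∈ (univ.erase (0 : F)) ×ˢ E₀, Complex.normSq (Tf ψ E (p.1 • p.2)) := by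
      rw [Finset.sum_product]
    rw [hprod, Finset.sum_comp (fun z : Fin d → F => Complex.normSq (Tf ψ E z))
      (fun p : F × (Fin d → F) => p.1 • p.2)]
    have hsub : ((univ.erase (0 : F)) ×ˢ E₀).image (fun p => p.1 • p.2)
        ⊆ univ.erase (0 : Fin d → F) := by
      intro z hz
      obtain ⟨p, hp, hpz⟩ := Finset.mem_image.mp hz
      rw [Finset.mem_product, Finset.mem_erase] at hp
      refine Finset.mem_erase.mpr ⟨?_, mem_univ _⟩
      rw [← hpz]
      exact smul_ne_zero hp.1.1 (fun h => h0 (h ▸ hp.2))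
    calc ∑ z ∈ ((univ.erase (0 : F)) ×ˢ E₀).image (fun p => p.1 • p.2),
          (#{p ∈ (univ.erase (0 : F)) ×ˢ E₀ | p.1 • p.2 = z}) •
            Complex.normSq (Tf ψ E z)
        ≤ ∑ z ∈ ((univ.erase (0 : F)) ×ˢ E₀).image (fun p => p.1 • p.2),
            μ * Complex.normSq (Tf ψ E z) := by
          refine Finset.sum_le_sum fun z hz => ?_
          rw [nsmul_eq_mul]
          have hzne : z ≠ 0 := by
            have := hsub hz
            exact (Finset.mem_erase.mp this).1
          exact mul_le_mul_of_nonneg_right (hcnt z hzne) (Complex.normSq_nonneg _)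
      _ ≤ ∑ z ∈ univ.erase (0 : Fin d → F), μ * Complex.normSq (Tf ψ E z) := by
          refine Finset.sum_le_sum_of_subset_of_nonneg hsub fun z _ _ => ?_
          exact mul_nonneg hμ0 (Complex.normSq_nonneg _)
      _ = μ * ∑ z ∈ univ.erase (0 : Fin d → F), Complex.normSq (Tf ψ E z) := by
          rw [Finset.mul_sum]
  have hb4 : ∑ z ∈ univ.erase (0 : Fin d → F), Complex.normSq (Tf ψ E z)
      = ((Fintype.card F ^ d : ℕ) : ℝ) * E.card - (E.card : ℝ) ^ 2 := by
    have := (Finset.add_sum_erase univ (fun z => Complex.normSq (Tf ψ E z))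
      (mem_univ (0 : Fin d → F))).symm
    rw [parseval ψ hψ E] at this
    have hT0 : Complex.normSq (Tf ψ E 0) = (E.card : ℝ) ^ 2 := by
      rw [Tf_zero, Complex.normSq_natCast]
      push_cast; ring
    rw [hT0] at this
    linarith [this]
  have hTnn : (0 : ℝ) ≤ ∑ z ∈ univ.erase (0 : Fin d → F), Complex.normSq (Tf ψ E z) :=
    Finset.sum_nonneg fun z _ => Complex.normSq_nonneg _
  calc ∑ s : F, Complex.normSq (S s)
      = ((E.card : ℝ) * E₀.card) ^ 2 + ∑ s ∈ univ.erase (0 : F), Complex.normSq (S s) := by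
        rw [hsplit, hS0sq]
    _ ≤ ((E.card : ℝ) * E₀.card) ^ 2 + (E₀.card : ℝ) *
          (μ * (((Fintype.card F ^ d : ℕ) : ℝ) * E.card - (E.card : ℝ) ^ 2)) := by
        have h5 : (E₀.card : ℝ) * ∑ s ∈ univ.erase (0 : F), ∑ y ∈ E₀,
              Complex.normSq (Tf ψ E (s • y))
            ≤ (E₀.card : ℝ) * (μ * (((Fintype.card F ^ d : ℕ) : ℝ) * E.card
              - (E.card : ℝ) ^ 2)) := by
          rw [← hb4]
          exact mul_le_mul_of_nonneg_left hb3 (by positivity)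
        linarith [hb2, h5]
    _ = ((E.card : ℝ) * E₀.card) ^ 2
        + (E.card : ℝ) * E₀.card * μ * (((Fintype.card F ^ d : ℕ) : ℝ) - E.card) := by
        ring

private lemma cnt_le_filter (W : Finset (Fin d → F)) (z : Fin d → F) (hz : z ≠ 0) :
    #{p ∈ (univ.erase (0 : F)) ×ˢ W | p.1 • p.2 = z}
      ≤ #{y ∈ W | ∃ t : F, y = t • z} := by
  apply Finset.card_le_card_of_injOn (fun p => p.2)
  · intro p hp
    rw [Finset.mem_coe, Finset.mem_filter, Finset.mem_product, Finset.mem_erase] at hp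
    obtain ⟨⟨⟨hp1, -⟩, hp2⟩, hpz⟩ := hp
    refine Finset.mem_filter.mpr ⟨hp2, p.1⁻¹, ?_⟩
    rw [← hpz, smul_smul, inv_mul_cancel₀ hp1, one_smul]
  · intro p hp p' hp' h2
    simp only [Finset.coe_filter, Set.mem_setOf_eq, Finset.mem_product,
      Finset.mem_erase, Finset.mem_univ] at hp hp'
    obtain ⟨⟨⟨hp1, -⟩, hp2⟩, hpz⟩ := hp
    obtain ⟨⟨⟨hp1', -⟩, hp2'⟩, hpz'⟩ := hp'
    have h2' : p.2 = p'.2 := h2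
    have hy0 : p.2 ≠ 0 := by
      intro h
      apply hz
      rw [← hpz, h, smul_zero]
    obtain ⟨i, hi⟩ := Function.ne_iff.mp hy0
    have hi' : p.2 i ≠ 0 := by simpa using hi
    have h3 : p.1 • p.2 = p'.1 • p.2 := by
      rw [hpz, ← hpz', h2']
    have hcoord : p.1 * p.2 i = p'.1 * p.2 i := by
      have := congrFun h3 i
      simpa using this
    exact Prod.ext (mul_right_cancel₀ hi' hcoord) h2'

private lemma cnt_le_q (W : Finset (Fin d → F)) (z : Fin d → F) :
    #{p ∈ (univ.erase (0 : F)) ×ˢ W | p.1 • p.2 = z} ≤ Fintype.card F - 1 := by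
  have h1 : #{p ∈ (univ.erase (0 : F)) ×ˢ W | p.1 • p.2 = z}
      ≤ (univ.erase (0 : F)).card := by
    apply Finset.card_le_card_of_injOn (fun p => p.1)
    · intro p hp
      rw [Finset.mem_coe, Finset.mem_filter, Finset.mem_product] at hp
      exact hp.1.1
    · intro p hp p' hp' h2
      simp only [Finset.coe_filter, Set.mem_setOf_eq, Finset.mem_product,
        Finset.mem_erase, Finset.mem_univ] at hp hp'
      obtain ⟨⟨⟨hp1, -⟩, hp2⟩, hpz⟩ := hp
      obtain ⟨⟨⟨hp1', -⟩, hp2'⟩, hpz'⟩ := hp'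
      have h2' : p.1 = p'.1 := h2
      have hsnd : p.2 = p'.2 := by
        have e1 : p.2 = p.1⁻¹ • z := by
          rw [← hpz, smul_smul, inv_mul_cancel₀ hp1, one_smul]
        have e2 : p'.2 = p'.1⁻¹ • z := by
          rw [← hpz', smul_smul, inv_mul_cancel₀ hp1', one_smul]
        rw [e1, e2, h2']
      exact Prod.ext h2' hsnd
  calc #{p ∈ (univ.erase (0 : F)) ×ˢ W | p.1 • p.2 = z}
      ≤ (univ.erase (0 : F)).card := h1
    _ = Fintype.card F - 1 := by
        rw [Finset.card_erase_of_mem (mem_univ _), Finset.card_univ]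

private lemma count_cs (X : Finset ((Fin d → F) × (Fin d → F))) :
    ((X.card : ℝ)) ^ 2 ≤ ((X.image (fun p => dotp p.1 p.2)).card : ℝ) *
      ∑ t ∈ X.image (fun p => dotp p.1 p.2), ((#{p ∈ X | dotp p.1 p.2 = t}) : ℝ) ^ 2 := by
  have h1 : X.card = ∑ t ∈ X.image (fun p => dotp p.1 p.2),
      #{p ∈ X | dotp p.1 p.2 = t} :=
    Finset.card_eq_sum_card_image _ _
  have h2 : ((X.card : ℝ)) = ∑ t ∈ X.image (fun p => dotp p.1 p.2),
      ((#{p ∈ X | dotp p.1 p.2 = t}) : ℝ) := by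
    rw [h1]; push_cast; rfl
  rw [h2]
  exact sq_sum_le_card_mul_sum_sq

private lemma final_algebra {qR Cs Cg AR A0R QnR μ cst M PimR PfinR : ℝ}
    (hCg : 0 < Cg)
    (hA1 : 1 ≤ AR) (hA01 : 1 ≤ A0R) (hMnn : 0 ≤ M)
    (hfour : qR * M ≤ (AR * A0R) ^ 2 + AR * A0R * μ * (QnR - AR))
    (hcs : (AR * A0R) ^ 2 ≤ PimR * M)
    (hkeyI : AR * μ * (QnR - AR) ≤ A0R * cst * QnR)
    (hkey' : Cs ^ 2 * (cst * QnR) ≤ Cg * AR ^ 2)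
    (hPimP : PimR ≤ PfinR) (hPimnn : 0 ≤ PimR) :
    qR * Cs ^ 2 ≤ PfinR * (Cs ^ 2 + Cg) := by
  have hMpos : 0 < M := by
    rcases eq_or_lt_of_le hMnn with h | h
    · exfalso
      rw [← h] at hcs
      have hprod : (1:ℝ) ≤ AR * A0R := by nlinarith [hA1, hA01]
      nlinarith [hcs, hprod]
    · exact h
  have hmid : Cs ^ 2 * (AR * A0R * μ * (QnR - AR)) ≤ Cg * (AR * A0R) ^ 2 := by
    have e2 : Cs ^ 2 * (AR * μ * (QnR - AR)) ≤ Cs ^ 2 * (A0R * cst * QnR) :=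
      mul_le_mul_of_nonneg_left hkeyI (sq_nonneg _)
    have e4 : Cs ^ 2 * (A0R * cst * QnR) ≤ A0R * (Cg * AR ^ 2) := by
      calc Cs ^ 2 * (A0R * cst * QnR) = A0R * (Cs ^ 2 * (cst * QnR)) := by ring
        _ ≤ A0R * (Cg * AR ^ 2) := by
          apply mul_le_mul_of_nonneg_left hkey' (by linarith)
    calc Cs ^ 2 * (AR * A0R * μ * (QnR - AR))
        = A0R * (Cs ^ 2 * (AR * μ * (QnR - AR))) := by ring
      _ ≤ A0R * (A0R * (Cg * AR ^ 2)) := by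
          apply mul_le_mul_of_nonneg_left (le_trans e2 e4) (by linarith)
      _ = Cg * (AR * A0R) ^ 2 := by ring
  have hfinal : qR * Cs ^ 2 * M ≤ (PfinR * (Cs ^ 2 + Cg)) * M := by
    have s2 : Cs ^ 2 * (qR * M)
        ≤ Cs ^ 2 * ((AR * A0R) ^ 2 + AR * A0R * μ * (QnR - AR)) :=
      mul_le_mul_of_nonneg_left hfour (sq_nonneg _)
    have s3 : Cs ^ 2 * ((AR * A0R) ^ 2 + AR * A0R * μ * (QnR - AR))
        ≤ (Cs ^ 2 + Cg) * (AR * A0R) ^ 2 := by nlinarith [hmid]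
    have s4 : (Cs ^ 2 + Cg) * (AR * A0R) ^ 2 ≤ (Cs ^ 2 + Cg) * (PimR * M) :=
      mul_le_mul_of_nonneg_left hcs (by nlinarith [sq_nonneg Cs])
    have s5 : (Cs ^ 2 + Cg) * (PimR * M) ≤ (PfinR * (Cs ^ 2 + Cg)) * M := by
      have h7 : PimR * M ≤ PfinR * M := mul_le_mul_of_nonneg_right hPimP hMnn
      nlinarith [h7, sq_nonneg Cs, hCg.le, hMnn]
    nlinarith [s2, s3, s4, s5]
  exact le_of_mul_le_mul_right hfinal hMpos

end aux

set_option maxHeartbeats 1000000 in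
/-- If every line through the origin meets `E ⊆ F_q^d` in at most `C_geom · q^(α/d)`
points and `|E| ≥ C_size · q^(d/2 + α/(2d))`, then the set of dot products of pairs of
elements of `E` has at least `q · C_size² / (C_size² + C_geom)` elements. -/
theorem stmt_7 {F : Type*} [Field F] [Fintype F] (d : ℕ) (hd : 0 < d)
    (Cgeom Csize α : ℝ) (hCgeom : 0 < Cgeom) (hCsize : 0 < Csize)
    (hα0 : 0 ≤ α) (hαd : α ≤ d)
    (E : Finset (Fin d → F))
    (hline : ∀ y : Fin d → F, y ≠ 0 →
      (Set.ncard ((E : Set (Fin d → F)) ∩ {x | ∃ t : F, x = t • y}) : ℝ) ≤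
        Cgeom * (Fintype.card F : ℝ) ^ (α / d))
    (hE : (E.card : ℝ) ≥
      Csize * (Fintype.card F : ℝ) ^ ((d : ℝ) / 2 + α / (2 * d))) :
    (Set.ncard {t : F | ∃ x ∈ E, ∃ y ∈ E, t = ∑ i, x i * y i} : ℝ) ≥
      (Fintype.card F : ℝ) * Csize ^ 2 / (Csize ^ 2 + Cgeom) := by
  classical
  set q := Fintype.card F with hq
  have hq2 : 2 ≤ q := Fintype.one_lt_card
  have hq0R : (0:ℝ) < q := by
    have : 0 < q := by omega
    exact_mod_cast this
  set Qn := q ^ d with hQn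
  have hcardPi : Fintype.card (Fin d → F) = Qn := by
    rw [hQn, hq]
    simp [Fintype.card_fun]
  have hAQn : E.card ≤ Qn := by rw [← hcardPi]; exact Finset.card_le_univ E
  set A := E.card with hA
  have hAQnR : (A:ℝ) ≤ (Qn:ℝ) := by exact_mod_cast hAQn
  set c : ℝ := Cgeom * (q : ℝ) ^ (α / (d:ℝ)) with hc
  have hc0 : 0 < c := mul_pos hCgeom (Real.rpow_pos_of_pos hq0R _)
  have hlineF : ∀ z : Fin d → F, z ≠ 0 → ((#{x ∈ E | ∃ t : F, x = t • z}) : ℝ) ≤ c := by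
    intro z hz
    have h := hline z hz
    have hset : ((E : Set (Fin d → F)) ∩ {x | ∃ t : F, x = t • z})
        = ((({x ∈ E | ∃ t : F, x = t • z}) : Finset _) : Set _) := by
      ext x
      simp [Finset.mem_filter]
    rw [hset, Set.ncard_coe_finset] at h
    exact h
  have hd0 : (d:ℝ) ≠ 0 := Nat.cast_ne_zero.mpr (by omega)
  have hkey : Csize ^ 2 * (c * (Qn:ℝ)) ≤ Cgeom * (A : ℝ) ^ 2 := by
    have h1 : Csize * (q:ℝ) ^ ((d:ℝ)/2 + α/(2*(d:ℝ))) ≤ (A:ℝ) := hE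
    have h2 : (Csize * (q:ℝ) ^ ((d:ℝ)/2 + α/(2*(d:ℝ))))^2 ≤ (A:ℝ)^2 := by
      apply pow_le_pow_left₀ (by positivity) h1
    have h3 : ((q:ℝ) ^ ((d:ℝ)/2 + α/(2*(d:ℝ))))^2 = (Qn:ℝ) * (q:ℝ)^(α/(d:ℝ)) := by
      have e1 : ((q:ℝ) ^ ((d:ℝ)/2 + α/(2*(d:ℝ))))^2
          = (q:ℝ) ^ (((d:ℝ)/2 + α/(2*(d:ℝ))) + ((d:ℝ)/2 + α/(2*(d:ℝ)))) := by
        rw [sq, ← Real.rpow_add hq0R]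
      rw [e1]
      have e2 : ((d:ℝ)/2 + α/(2*(d:ℝ))) + ((d:ℝ)/2 + α/(2*(d:ℝ))) = (d:ℝ) + α/(d:ℝ) := by
        field_simp
        ring
      rw [e2, Real.rpow_add hq0R]
      congr 1
      rw [Real.rpow_natCast]
      rw [hQn]
      push_cast
      ring
    have h4 : Csize^2 * ((Qn:ℝ) * (q:ℝ)^(α/(d:ℝ))) ≤ (A:ℝ)^2 := by
      calc Csize^2 * ((Qn:ℝ) * (q:ℝ)^(α/(d:ℝ)))
          = (Csize * (q:ℝ) ^ ((d:ℝ)/2 + α/(2*(d:ℝ))))^2 := by rw [mul_pow, h3]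
        _ ≤ (A:ℝ)^2 := h2
    calc Csize^2 * (c * (Qn:ℝ)) = Cgeom * (Csize^2 * ((Qn:ℝ) * (q:ℝ)^(α/(d:ℝ)))) := by
          rw [hc]; ring
      _ ≤ Cgeom * (A:ℝ)^2 := mul_le_mul_of_nonneg_left h4 hCgeom.le
  have hA1 : 1 ≤ A := by
    have hA0R : (0:ℝ) < Csize * (q:ℝ)^((d:ℝ)/2 + α/(2*(d:ℝ))) := by positivity
    have : (0:ℝ) < (A:ℝ) := lt_of_lt_of_le hA0R hE
    exact_mod_cast this
  have hA1R : (1:ℝ) ≤ (A:ℝ) := by exact_mod_cast hA1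
  have hgoalset : {t : F | ∃ x ∈ E, ∃ y ∈ E, t = ∑ i, x i * y i}
      = (((E ×ˢ E).image (fun p => dotp p.1 p.2) : Finset F) : Set F) := by
    ext t
    simp only [Set.mem_setOf_eq, Finset.coe_image, Set.mem_image, Finset.mem_coe,
      Finset.mem_product]
    constructor
    · rintro ⟨x, hx, y, hy, rfl⟩
      exact ⟨(x, y), ⟨hx, hy⟩, rfl⟩
    · rintro ⟨p, ⟨h1, h2⟩, rfl⟩
      exact ⟨p.1, h1, p.2, h2, rfl⟩
  rw [hgoalset, Set.ncard_coe_finset, ge_iff_le, div_le_iff₀ (by positivity)]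
  set Pfin := (E ×ˢ E).image (fun p => dotp p.1 p.2) with hPfin
  have hP1 : 1 ≤ Pfin.card := by
    obtain ⟨x, hx⟩ := Finset.card_pos.mp (show 0 < E.card by omega)
    exact Finset.card_pos.mpr
      ⟨dotp x x, Finset.mem_image.mpr ⟨(x, x), Finset.mem_product.mpr ⟨hx, hx⟩, rfl⟩⟩
  have hPge : (1:ℝ) ≤ (Pfin.card : ℝ) := by exact_mod_cast hP1
  have hc1 : (0 : Fin d → F) ∈ E → 1 ≤ c := by
    intro h0E
    have hz : (fun _ : Fin d => (1:F)) ≠ 0 := by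
      intro h
      have := congrFun h ⟨0, hd⟩
      simpa using this
    have h1 := hlineF _ hz
    have h2 : (0 : Fin d → F) ∈ {x ∈ E | ∃ t : F, x = t • (fun _ : Fin d => (1:F))} :=
      Finset.mem_filter.mpr ⟨h0E, 0, by simp⟩
    have h3 : 1 ≤ #{x ∈ E | ∃ t : F, x = t • (fun _ : Fin d => (1:F))} :=
      Finset.card_pos.mpr ⟨0, h2⟩
    calc (1:ℝ) ≤ (#{x ∈ E | ∃ t : F, x = t • (fun _ : Fin d => (1:F))} : ℝ) := by
          exact_mod_cast h3
      _ ≤ c := h1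
  by_cases hE0 : E.erase 0 = ∅
  · -- E = {0}
    have h0E : (0 : Fin d → F) ∈ E := by
      obtain ⟨x, hx⟩ := Finset.card_pos.mp (show 0 < E.card by omega)
      by_cases hx0 : x = 0
      · exact hx0 ▸ hx
      · exact absurd (Finset.mem_erase.mpr ⟨hx0, hx⟩) (by simp [hE0])
    have hEsing : E = {0} := by
      apply Finset.eq_singleton_iff_unique_mem.mpr
      refine ⟨h0E, fun x hx => ?_⟩
      by_contra hx0
      exact absurd (Finset.mem_erase.mpr ⟨hx0, hx⟩) (by simp [hE0])
    have hA1' : (A:ℝ) = 1 := by rw [hA, hEsing]; simp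
    have hcge : 1 ≤ c := hc1 h0E
    have hqQn : (q:ℝ) ≤ (Qn:ℝ) := by
      have : q ≤ Qn := by
        rw [hQn]
        calc q = q^1 := (pow_one q).symm
          _ ≤ q^d := Nat.pow_le_pow_right (by omega) hd
      exact_mod_cast this
    have hmain : (q:ℝ) * Csize^2 ≤ Cgeom := by
      rw [hA1'] at hkey
      have h6 : (q:ℝ) ≤ c * Qn := by nlinarith [hcge, hqQn, hq0R]
      nlinarith [sq_nonneg Csize, h6]
    calc (q:ℝ) * Csize^2 ≤ Cgeom := hmain
      _ ≤ Csize^2 + Cgeom := by nlinarith [sq_nonneg Csize]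
      _ ≤ (Pfin.card:ℝ) * (Csize^2 + Cgeom) := le_mul_of_one_le_left (by positivity) hPge
  · -- main case : E₀ nonempty
    have hA01 : 1 ≤ (E.erase 0).card :=
      Finset.card_pos.mpr (Finset.nonempty_iff_ne_empty.mpr hE0)
    set E₀ := E.erase (0 : Fin d → F) with hE₀
    set A₀ := E₀.card with hA₀
    have h0E₀ : (0 : Fin d → F) ∉ E₀ := Finset.notMem_erase _ _
    have hE₀sub : E₀ ⊆ E := Finset.erase_subset _ _
    have hA₀1R : (1:ℝ) ≤ (A₀:ℝ) := by exact_mod_cast hA01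
    set cst : ℝ := min c (q:ℝ) with hcst
    have hcst0 : 0 ≤ cst := le_min hc0.le hq0R.le
    have hcstc : cst ≤ c := min_le_left _ _
    have hkey' : Csize ^ 2 * (cst * (Qn:ℝ)) ≤ Cgeom * (A : ℝ) ^ 2 := by
      refine le_trans ?_ hkey
      have : cst * (Qn:ℝ) ≤ c * Qn := by
        apply mul_le_mul_of_nonneg_right hcstc (by positivity)
      exact mul_le_mul_of_nonneg_left this (sq_nonneg _)
    by_cases hcase : ((0 : Fin d → F) ∈ E) ∧ ((A:ℝ) < cst)
    · -- exceptional case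
      obtain ⟨h0E, hAc⟩ := hcase
      have hcstq : cst ≤ (q:ℝ) := min_le_right _ _
      have hAq : (A:ℝ) < (q:ℝ) := lt_of_lt_of_le hAc hcstq
      have hAcc : (A:ℝ) < c := lt_of_lt_of_le hAc (min_le_left _ _)
      by_cases hb : (q:ℝ) * A ≤ (A:ℝ) + Qn
      · have h1 : (q:ℝ) * Csize^2 ≤ Csize^2 + Cgeom := by
          -- (q-1)A ≤ Qn, A < c, Cs² c Qn ≤ Cg A²
          have e1 : Csize^2 * (((q:ℝ)-1) * A * A) ≤ Csize^2 * ((Qn:ℝ) * A) := by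
            apply mul_le_mul_of_nonneg_left _ (sq_nonneg _)
            have : ((q:ℝ)-1) * A ≤ Qn := by linarith
            apply mul_le_mul_of_nonneg_right this (by positivity)
          have e2 : Csize^2 * ((Qn:ℝ) * A) ≤ Csize^2 * ((Qn:ℝ) * c) := by
            apply mul_le_mul_of_nonneg_left _ (sq_nonneg _)
            apply mul_le_mul_of_nonneg_left hAcc.le (by positivity)
          have e3 : Csize^2 * ((Qn:ℝ) * c) ≤ Cgeom * (A:ℝ)^2 := by
            calc Csize^2 * ((Qn:ℝ) * c) = Csize^2 * (c * Qn) := by ring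
              _ ≤ Cgeom * (A:ℝ)^2 := hkey
          -- so (q-1)Cs² A² ≤ Cg A², divide by A² ≥ 1
          have e4 : ((q:ℝ)-1) * Csize^2 * (A:ℝ)^2 ≤ Cgeom * (A:ℝ)^2 := by
            have e14 := le_trans e1 (le_trans e2 e3)
            calc ((q:ℝ)-1) * Csize^2 * (A:ℝ)^2
                = Csize^2 * (((q:ℝ)-1) * A * A) := by ring
              _ ≤ Cgeom * (A:ℝ)^2 := e14
          have e5 : ((q:ℝ)-1) * Csize^2 ≤ Cgeom := by
            have hA2 : (0:ℝ) < (A:ℝ)^2 := by positivity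
            have := (mul_le_mul_iff_of_pos_right hA2).mp e4
            exact this
          linarith
        calc (q:ℝ)*Csize^2 ≤ Csize^2 + Cgeom := h1
          _ ≤ (Pfin.card:ℝ) * (Csize^2 + Cgeom) := le_mul_of_one_le_left (by positivity) hPge
      · push_neg at hb
        have hQlt : (Qn:ℝ) < (q:ℝ)*(q:ℝ) := by
          nlinarith [hb, hAq, hA1R, hq0R,
            mul_pos (show (0:ℝ) < (q:ℝ) - A by linarith)
              (show (0:ℝ) < (q:ℝ) - 1 by nlinarith [hq0R, hAq, hA1R])]
        have hQltN : Qn < q^2 := by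
          have : ((q^2 : ℕ):ℝ) = (q:ℝ)*(q:ℝ) := by push_cast; ring
          rw [← this] at hQlt
          exact_mod_cast hQlt
        have hd1 : d = 1 := by
          have h2 : q^d < q^2 := hQn ▸ hQltN
          have := (Nat.pow_lt_pow_iff_right (by omega : 1 < q)).mp h2
          omega
        subst hd1
        obtain ⟨x₀, hx₀E⟩ := Finset.card_pos.mp (show 0 < A₀ by omega)
        have hx₀ : x₀ ∈ E := hE₀sub hx₀E
        have hx₀ne : x₀ ≠ 0 := (Finset.mem_erase.mp hx₀E).1
        have hx₀0 : x₀ 0 ≠ 0 := by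
          intro h
          apply hx₀ne
          funext i
          rw [Subsingleton.elim i 0, h]
          rfl
        have hinj : Set.InjOn (fun y => dotp x₀ y) E := by
          intro y hy y' hy' hxy
          have h5 : x₀ 0 * y 0 = x₀ 0 * y' 0 := by
            simpa [dotp, Fin.sum_univ_one] using hxy
          have h00 := mul_left_cancel₀ hx₀0 h5
          funext i
          rw [Subsingleton.elim i 0]
          exact h00
        have hsub2 : E.image (fun y => dotp x₀ y) ⊆ Pfin := by
          intro t ht
          obtain ⟨y, hy, rfl⟩ := Finset.mem_image.mp ht
          exact Finset.mem_image.mpr ⟨(x₀, y), Finset.mem_product.mpr ⟨hx₀, hy⟩, rfl⟩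
        have hPA : (A:ℝ) ≤ (Pfin.card:ℝ) := by
          have h1 : E.card = (E.image (fun y => dotp x₀ y)).card :=
            (Finset.card_image_of_injOn hinj).symm
          have h2 := Finset.card_le_card hsub2
          have : E.card ≤ Pfin.card := h1 ▸ h2
          exact_mod_cast this
        have hQn1 : (Qn:ℝ) = (q:ℝ) := by rw [hQn]; norm_num
        have h2 : (q:ℝ) * Csize^2 ≤ (A:ℝ)*(Csize^2 + Cgeom) := by
          have e1 : Csize^2 * ((A:ℝ) * q) ≤ Csize^2 * (c * q) := by
            apply mul_le_mul_of_nonneg_left _ (sq_nonneg _)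
            apply mul_le_mul_of_nonneg_right hAcc.le hq0R.le
          have e2 : Csize^2 * (c * (q:ℝ)) ≤ Cgeom * (A:ℝ)^2 := by
            rw [hQn1] at hkey
            exact hkey
          have e3 : ((q:ℝ)*Csize^2)*A ≤ (Cgeom*(A:ℝ))*A := by nlinarith [e1, e2]
          have e4 : (q:ℝ)*Csize^2 ≤ Cgeom*A := by
            have hApos : (0:ℝ) < A := by linarith
            exact (mul_le_mul_iff_of_pos_right hApos).mp e3
          nlinarith [e4, sq_nonneg Csize, hA1R]
        calc (q:ℝ)*Csize^2 ≤ (A:ℝ)*(Csize^2+Cgeom) := h2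
          _ ≤ (Pfin.card:ℝ)*(Csize^2+Cgeom) := by
              apply mul_le_mul_of_nonneg_right hPA (by positivity)
    · -- main chain
      push_neg at hcase
      obtain ⟨ψ, hψne⟩ := (AddChar.exists_apply_ne_zero (a := (1:F))).mpr one_ne_zero
      have hψ : ψ.IsPrimitive := AddChar.IsPrimitive.of_ne_one (AddChar.ne_one_iff.mpr ⟨1, hψne⟩)
      obtain ⟨μ, hμ0, hcnt, hkeyI⟩ : ∃ μ : ℝ, 0 ≤ μ ∧
          (∀ z : Fin d → F, z ≠ 0 →
            ((#{p ∈ (univ.erase (0:F)) ×ˢ E₀ | p.1 • p.2 = z}) : ℝ) ≤ μ) ∧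
          (A:ℝ) * μ * ((Qn:ℝ) - A) ≤ (A₀:ℝ) * cst * Qn := by
        by_cases h0E : (0 : Fin d → F) ∈ E
        · -- 0 ∈ E, and cst ≤ A
          have hcstA : cst ≤ (A:ℝ) := hcase h0E
          have hcst1 : (1:ℝ) ≤ cst := le_min (hc1 h0E) (by exact_mod_cast (by omega : 1 ≤ q))
          refine ⟨cst - 1, by linarith, ?_, ?_⟩
          · intro z hz
            have hb1 := cnt_le_filter E₀ z hz
            have hE0f : {y ∈ E₀ | ∃ t : F, y = t • z}
                = ({x ∈ E | ∃ t : F, x = t • z}).erase 0 := by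
              rw [hE₀]
              exact Finset.filter_erase _ _ _
            have h0mem : (0 : Fin d → F) ∈ {x ∈ E | ∃ t : F, x = t • z} :=
              Finset.mem_filter.mpr ⟨h0E, 0, by simp⟩
            have h1le : 1 ≤ #{x ∈ E | ∃ t : F, x = t • z} := Finset.card_pos.mpr ⟨0, h0mem⟩
            have hcard : (({x ∈ E | ∃ t : F, x = t • z}).erase 0).card
                = #{x ∈ E | ∃ t : F, x = t • z} - 1 := Finset.card_erase_of_mem h0mem
            have hcR : ((#{p ∈ (univ.erase (0:F)) ×ˢ E₀ | p.1 • p.2 = z}) : ℝ) ≤ c - 1 := by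
              have h5 : #{p ∈ (univ.erase (0:F)) ×ˢ E₀ | p.1 • p.2 = z}
                  ≤ #{x ∈ E | ∃ t : F, x = t • z} - 1 := by
                rw [← hcard, ← hE0f]
                exact hb1
              have h6 : ((#{p ∈ (univ.erase (0:F)) ×ˢ E₀ | p.1 • p.2 = z}) : ℝ)
                  ≤ ((#{x ∈ E | ∃ t : F, x = t • z}) : ℝ) - 1 := by
                have := (Nat.cast_le (α := ℝ)).mpr h5
                rwa [Nat.cast_sub h1le, Nat.cast_one] at this
              linarith [hlineF z hz]
            have hqR : ((#{p ∈ (univ.erase (0:F)) ×ˢ E₀ | p.1 • p.2 = z}) : ℝ)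
                ≤ (q:ℝ) - 1 := by
              have h5 := cnt_le_q E₀ z
              have := (Nat.cast_le (α := ℝ)).mpr h5
              rwa [Nat.cast_sub (by omega : 1 ≤ q), Nat.cast_one] at this
            rcases le_total c (q:ℝ) with hcq | hcq
            · rw [hcst, min_eq_left hcq]; exact hcR
            · rw [hcst, min_eq_right hcq]; exact hqR
          · have hA₀A : (A₀:ℝ) = (A:ℝ) - 1 := by
              rw [hA₀, hE₀, Finset.card_erase_of_mem h0E, ← hA, Nat.cast_sub hA1]
              norm_num
            rw [hA₀A]
            have t1 : 0 ≤ (A:ℝ)^2 * (cst - 1) := mul_nonneg (sq_nonneg _) (by linarith)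
            have t2 : 0 ≤ (Qn:ℝ) * ((A:ℝ) - cst) := mul_nonneg (by positivity) (by linarith)
            nlinarith [t1, t2]
        · -- 0 ∉ E : E₀ = E
          have hE₀E : E₀ = E := by rw [hE₀]; exact Finset.erase_eq_of_notMem h0E
          refine ⟨cst, hcst0, ?_, ?_⟩
          · intro z hz
            have hb1 := cnt_le_filter E₀ z hz
            have hcR : ((#{p ∈ (univ.erase (0:F)) ×ˢ E₀ | p.1 • p.2 = z}) : ℝ) ≤ c := by
              have h2 : ((#{y ∈ E₀ | ∃ t : F, y = t • z}) : ℝ) ≤ c := by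
                rw [hE₀E]
                exact hlineF z hz
              calc ((#{p ∈ (univ.erase (0:F)) ×ˢ E₀ | p.1 • p.2 = z}) : ℝ)
                  ≤ ((#{y ∈ E₀ | ∃ t : F, y = t • z}) : ℝ) := by exact_mod_cast hb1
                _ ≤ c := h2
            have hqR : ((#{p ∈ (univ.erase (0:F)) ×ˢ E₀ | p.1 • p.2 = z}) : ℝ)
                ≤ (q:ℝ) := by
              have h5 := cnt_le_q E₀ z
              have h6 := (Nat.cast_le (α := ℝ)).mpr h5
              have h7 : ((q - 1 : ℕ) : ℝ) ≤ (q:ℝ) := by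
                rw [Nat.cast_sub (by omega : 1 ≤ q)]
                linarith
              linarith
            exact le_min hcR hqR
          · have hA₀A : (A₀:ℝ) = (A:ℝ) := by rw [hA₀, hE₀E, ← hA]
            rw [hA₀A]
            have t1 : 0 ≤ (A:ℝ) * cst * (A:ℝ) := by positivity
            nlinarith [t1]
      -- the Fourier chain
      have hfour := fourier_bound ψ hψ E E₀ h0E₀ μ hμ0 hcnt
      have hcs := count_cs (E ×ˢ E₀)
      have hcardX : ((E ×ˢ E₀).card : ℝ) = (A:ℝ) * A₀ := by
        rw [Finset.card_product]
        push_cast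
        rfl
      set M : ℝ := ∑ t ∈ (E ×ˢ E₀).image (fun p => dotp p.1 p.2),
          ((#{p ∈ E ×ˢ E₀ | dotp p.1 p.2 = t}) : ℝ) ^ 2 with hM
      set Pim := (E ×ˢ E₀).image (fun p => dotp p.1 p.2) with hPim
      have hPimsub : Pim ⊆ Pfin := by
        rw [hPim, hPfin]
        apply Finset.image_subset_image
        exact Finset.product_subset_product_right hE₀sub
      have hPimP : (Pim.card : ℝ) ≤ (Pfin.card : ℝ) := by
        exact_mod_cast Finset.card_le_card hPimsub
      rw [hcardX] at hcs
      have hMnn : 0 ≤ M :=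
        Finset.sum_nonneg fun t _ => sq_nonneg _
      exact final_algebra hCgeom hA1R hA₀1R hMnn hfour hcs hkeyI hkey' hPimP
        (Nat.cast_nonneg _)
end
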